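/- arXiv:2211.10614 — 8 statements merged into one kernel-verified Lean document; each statement's English description precedes it below -/
import Mathlib

section
/- For every integer n ≥ 4, the nonlocal metric dimension of the cycle C_n on n vertices equals 2. -/
/-- `X` is a nonlocal resolving set of `G`: every pair of distinct non-adjacent
vertices is resolved by some vertex of `X`. -/
def IsNLResolving {V : Type*} (G : SimpleGraph V) (X : Finset V) : Prop :=
  ∀ u v : V, u ≠ v → ¬ G.Adj u v → ∃ x ∈ X, G.dist u x ≠ G.dist v x

/-- The nonlocal metric dimension of `G`. -/
noncomputable def nldim {V : Type*} [Fintype V] (G : SimpleGraph V) : ℕ :=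
  sInf {n | ∃ X : Finset V, X.card = n ∧ IsNLResolving G X}

/-- `X` is a resolving set of `G`. -/
def IsResolving {V : Type*} (G : SimpleGraph V) (X : Finset V) : Prop :=
  ∀ u v : V, u ≠ v → ∃ x ∈ X, G.dist u x ≠ G.dist v x

/-- The metric dimension of `G`. -/
noncomputable def metricDim {V : Type*} [Fintype V] (G : SimpleGraph V) : ℕ :=
  sInf {n | ∃ X : Finset V, X.card = n ∧ IsResolving G X}

/-- The corona product `G ⊙ H`: one copy of `G` and, for each vertex `g` of `G`,
a copy of `H` whose vertices are all joined to `g`. -/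
def corona {V W : Type*} (G : SimpleGraph V) (H : SimpleGraph W) :
    SimpleGraph (V ⊕ V × W) :=
  SimpleGraph.fromRel (fun a b =>
    match a, b with
    | Sum.inl g, Sum.inl g' => G.Adj g g'
    | Sum.inl g, Sum.inr p => g = p.1
    | Sum.inr p, Sum.inr q => p.1 = q.1 ∧ H.Adj p.2 q.2
    | _, _ => False)

/-- The join `H + K₁`: a new vertex (`none`) adjacent to every vertex of `H`. -/
def joinK1 {W : Type*} (H : SimpleGraph W) : SimpleGraph (Option W) :=
  SimpleGraph.fromRel (fun a b =>
    a = none ∨ ∃ w w', a = some w ∧ b = some w' ∧ H.Adj w w')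

/-- The wheel `W_{1,n} = K₁ + Cₙ`, with central vertex `none`. -/
def wheel (n : ℕ) : SimpleGraph (Option (Fin n)) :=
  joinK1 (SimpleGraph.cycleGraph n)

/-- `A_{i,j}` is a gap of `X ⊆ V(Cₙ)`: `i, j ∈ X`, `i ≠ j`, and no vertex of
`{i+1, …, j-1}` (cyclically) lies in `X`. -/
def IsGap {n : ℕ} (X : Finset (Fin n)) (i j : Fin n) : Prop :=
  i ∈ X ∧ j ∈ X ∧ i ≠ j ∧
    ∀ k : Fin n, 0 < (k - i).val → (k - i).val < (j - i).val → k ∉ X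

/-- The number of vertices in the gap `A_{i,j} = {i+1, …, j-1}`. -/
def gapSize {n : ℕ} (i j : Fin n) : ℕ := (j - i).val - 1

/-- The edge cover number `β'(G)`: the least number of edges of `G` covering all
vertices. -/
noncomputable def edgeCoverNum {V : Type*} [Fintype V] (G : SimpleGraph V) : ℕ :=
  sInf {n | ∃ F : Finset (Sym2 V), F.card = n ∧ ↑F ⊆ G.edgeSet ∧ ∀ v : V, ∃ e ∈ F, v ∈ e}

open SimpleGraph
open scoped Fin.NatCast Fin.IntCast Fin.CommRing

lemma mod2 {n m : ℕ} (hn : 0 < n) (h : m < 2*n) : m % n = if m < n then m else m - n := by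
  split_ifs with hlt
  · exact Nat.mod_eq_of_lt hlt
  · rw [Nat.mod_eq_sub_mod (le_of_not_gt hlt), Nat.mod_eq_of_lt (by omega)]

lemma val_one_of_two_le {n : ℕ} [NeZero n] (hn : 2 ≤ n) : ((1 : Fin n)).val = 1 := by
  rw [Fin.val_one']; exact Nat.mod_eq_of_lt (by omega)

lemma eq_one_of_val {n : ℕ} [NeZero n] (hn : 2 ≤ n) (x : Fin n) (hx : x.val = 1) : x = 1 :=
  Fin.ext (by rw [hx, val_one_of_two_le hn])

lemma cyc_walk {n : ℕ} [NeZero n] (hn : 2 ≤ n) (a : Fin n) :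
    ∀ k : ℕ, ∃ p : (cycleGraph n).Walk a (a + (k : Fin n)), p.length = k := by
  intro k
  induction k with
  | zero => exact ⟨Walk.nil.copy rfl (by simp), by simp⟩
  | succ k ih =>
    obtain ⟨p, hp⟩ := ih
    have hadj : (cycleGraph n).Adj (a + (k : Fin n)) (a + ((k+1 : ℕ) : Fin n)) := by
      rw [cycleGraph_adj']
      right
      have : a + ((k+1 : ℕ) : Fin n) - (a + (k : Fin n)) = 1 := by
        push_cast; ring
      rw [this, val_one_of_two_le hn]
    exact ⟨p.concat hadj, by simp [hp]⟩

lemma step_min {n : ℕ} [NeZero n] (hn : 2 ≤ n) (y : Fin n) :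
    min ((y+1) : Fin n).val (-(y+1) : Fin n).val ≤ min y.val (-y : Fin n).val + 1 := by
  have hy := y.isLt
  have h1 : ((y+1) : Fin n).val = (y.val + 1) % n := by
    rw [Fin.add_def, val_one_of_two_le hn]
  have h2 : (-(y+1) : Fin n).val = (n - ((y.val + 1) % n)) % n := by
    rw [Fin.neg_def, h1]
  have h3 : (-y : Fin n).val = (n - y.val) % n := by rw [Fin.neg_def]
  rw [h1, h2, h3]
  rw [mod2 (by omega) (by omega : y.val + 1 < 2*n)]
  split_ifs with hlt
  · rw [mod2 (by omega) (by omega), mod2 (by omega) (by omega)]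
    split_ifs <;> omega
  · rw [mod2 (by omega) (by omega), mod2 (by omega) (by omega)]
    split_ifs <;> omega

lemma walk_lb {n : ℕ} [NeZero n] (hn : 2 ≤ n) {a b : Fin n} (p : (cycleGraph n).Walk a b) :
    min (b - a).val (a - b).val ≤ p.length := by
  induction p with
  | nil => simp
  | @cons a c b h p ih =>
    rw [cycleGraph_adj'] at h
    rw [Walk.length_cons]
    rcases h with h' | h'
    · have hc : a = c + 1 := by rw [← eq_one_of_val hn _ h']; ring
      have e1 : a - b = (c - b) + 1 := by rw [hc]; ring
      have e2 : b - a = -((c - b) + 1) := by rw [hc]; ring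
      calc min (b - a).val (a - b).val = min ((c-b)+1 : Fin n).val (-((c-b)+1) : Fin n).val := by
            rw [e1, e2, min_comm]
        _ ≤ min (c-b).val (-(c-b) : Fin n).val + 1 := step_min hn _
        _ ≤ p.length + 1 := by
            have h4 : -(c-b) = b - c := by ring
            rw [h4, min_comm]; exact Nat.add_le_add_right ih 1
    · have hc : c = a + 1 := by rw [← eq_one_of_val hn _ h']; ring
      have e1 : b - a = (b - c) + 1 := by rw [hc]; ring
      have e2 : a - b = -((b - c) + 1) := by rw [hc]; ring
      calc min (b - a).val (a - b).val = min ((b-c)+1 : Fin n).val (-((b-c)+1) : Fin n).val := by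
            rw [e1, e2]
        _ ≤ min (b-c).val (-(b-c) : Fin n).val + 1 := step_min hn _
        _ ≤ p.length + 1 := by
            have h4 : -(b-c) = c - b := by ring
            rw [h4]; exact Nat.add_le_add_right ih 1

lemma cyc_dist {n : ℕ} [NeZero n] (hn : 2 ≤ n) (a b : Fin n) :
    (cycleGraph n).dist a b = min (b - a).val (a - b).val := by
  apply le_antisymm
  · apply le_min
    · obtain ⟨p, hp⟩ := cyc_walk hn a (b - a).val
      have hb : a + (((b - a).val : ℕ) : Fin n) = b := by
        rw [Fin.cast_val_eq_self, add_sub_cancel]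
      calc (cycleGraph n).dist a b ≤ (p.copy rfl hb).length := dist_le _
        _ = (b - a).val := by rw [Walk.length_copy, hp]
    · obtain ⟨p, hp⟩ := cyc_walk hn b (a - b).val
      have hb : b + (((a - b).val : ℕ) : Fin n) = a := by
        rw [Fin.cast_val_eq_self, add_sub_cancel]
      rw [SimpleGraph.dist_comm]
      calc (cycleGraph n).dist b a ≤ (p.copy rfl hb).length := dist_le _
        _ = (a - b).val := by rw [Walk.length_copy, hp]
  · obtain ⟨p, hp⟩ := cyc_walk hn a (b - a).val
    have hb : a + (((b - a).val : ℕ) : Fin n) = b := by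
      rw [Fin.cast_val_eq_self, add_sub_cancel]
    obtain ⟨q, hq⟩ := (p.copy rfl hb).reachable.exists_walk_length_eq_dist
    rw [← hq]
    exact walk_lb hn q

set_option maxHeartbeats 1000000 in
lemma arith {n a b : ℕ} (hn : 4 ≤ n) (ha : a < n) (hb : b < n) (hab : a ≠ b)
    (h0 : min ((n-a)%n) a = min ((n-b)%n) b)
    (h1 : min ((n-a+1)%n) ((n-1+a)%n) = min ((n-b+1)%n) ((n-1+b)%n)) : False := by
  rw [mod2 (by omega) (by omega), mod2 (by omega) (by omega)] at h0
  rw [mod2 (by omega) (by omega), mod2 (by omega) (by omega),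
      mod2 (by omega) (by omega), mod2 (by omega) (by omega)] at h1
  split_ifs at h0 h1 <;> omega

/-- For every `n ≥ 4`, the nonlocal metric dimension of the cycle
`Cₙ` equals `2`. -/
theorem stmt_2 (n : ℕ) (hn : 4 ≤ n) :
    nldim (SimpleGraph.cycleGraph n) = 2 := by
  have : NeZero n := ⟨by omega⟩
  have hn2 : 2 ≤ n := by omega
  have hv1 : ((1 : Fin n)).val = 1 := val_one_of_two_le hn2
  have hv0 : ((0 : Fin n)).val = 0 := rfl
  have hv2 : ((1 + 1 : Fin n)).val = 2 := by
    rw [Fin.add_def, hv1]; exact Nat.mod_eq_of_lt (by omega)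
  have hvm1 : ((-1 : Fin n)).val = n - 1 := by
    rw [Fin.neg_def]; simp only [hv1]; exact Nat.mod_eq_of_lt (by omega)
  have hvm2 : ((-(1+1) : Fin n)).val = n - 2 := by
    rw [Fin.neg_def]; simp only [hv2]; exact Nat.mod_eq_of_lt (by omega)
  have h01 : (0 : Fin n) ≠ 1 := by
    intro h; have := congrArg Fin.val h; rw [hv0, hv1] at this; omega
  -- membership : {0, 1} is an NL-resolving set
  have h2mem : 2 ∈ {m | ∃ X : Finset (Fin n), X.card = m ∧
      IsNLResolving (cycleGraph n) X} := by
    refine ⟨{0, 1}, by rw [Finset.card_insert_of_notMem (by simpa using h01)]; rfl, ?_⟩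
    intro u v huv _
    by_contra hcon
    push_neg at hcon
    have h0 := hcon 0 (by simp)
    have h1 := hcon 1 (by simp)
    rw [cyc_dist hn2, cyc_dist hn2] at h0 h1
    rw [zero_sub, zero_sub, sub_zero, sub_zero] at h0
    have ha := u.isLt
    have hb := v.isLt
    have hab : u.val ≠ v.val := fun h => huv (Fin.ext h)
    have e1 : ((-u : Fin n)).val = (n - u.val) % n := by rw [Fin.neg_def]
    have e2 : ((-v : Fin n)).val = (n - v.val) % n := by rw [Fin.neg_def]
    have e3 : ((u - 1 : Fin n)).val = (n - 1 + u.val) % n := by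
      rw [Fin.sub_def, hv1]
    have e4 : ((v - 1 : Fin n)).val = (n - 1 + v.val) % n := by
      rw [Fin.sub_def, hv1]
    have e5 : ((1 - u : Fin n)).val = (n - u.val + 1) % n := by
      rw [Fin.sub_def, hv1]
    have e6 : ((1 - v : Fin n)).val = (n - v.val + 1) % n := by
      rw [Fin.sub_def, hv1]
    rw [e1, e2] at h0
    rw [e3, e4, e5, e6] at h1
    exact arith (by omega) ha hb hab h0 h1
  have key : nldim (cycleGraph n) =
      sInf {m | ∃ X : Finset (Fin n), X.card = m ∧ IsNLResolving (cycleGraph n) X} := rfl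
  rw [key]
  refine le_antisymm (Nat.sInf_le h2mem) (le_csInf ⟨2, h2mem⟩ ?_)
  rintro m ⟨X, hXcard, hres⟩
  by_contra hm
  push_neg at hm
  interval_cases m
  · -- empty set
    rw [Finset.card_eq_zero] at hXcard
    obtain ⟨x, hx, -⟩ := hres 0 (1+1)
      (by intro h; have := congrArg Fin.val h; rw [hv0, hv2] at this; omega)
      (by rw [cycleGraph_adj']; push_neg
          constructor
          · rw [zero_sub, hvm2]; omega
          · rw [sub_zero, hv2]; omega)
    rw [hXcard] at hx
    exact absurd hx (Finset.notMem_empty x)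
  · -- singleton
    rw [Finset.card_eq_one] at hXcard
    obtain ⟨x, rfl⟩ := hXcard
    have hsub1 : (x + 1) - (x - 1) = 1 + 1 := by ring
    have hsub2 : (x - 1) - (x + 1) = -(1 + 1) := by ring
    obtain ⟨y, hy, hne⟩ := hres (x + 1) (x - 1)
      (by intro h
          have : ((x+1) - (x-1) : Fin n) = 0 := by rw [h]; ring
          rw [hsub1] at this
          have := congrArg Fin.val this; rw [hv2, hv0] at this; omega)
      (by rw [cycleGraph_adj']; push_neg
          rw [hsub1, hsub2, hv2, hvm2]
          omega)
    rw [Finset.mem_singleton] at hy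
    rw [hy] at hne
    apply hne
    rw [cyc_dist hn2, cyc_dist hn2]
    have r1 : x - (x + 1) = -1 := by ring
    have r2 : (x + 1) - x = 1 := by ring
    have r3 : x - (x - 1) = 1 := by ring
    have r4 : (x - 1) - x = -1 := by ring
    rw [r1, r2, r3, r4, hv1, hvm1]
    omega
end

section
/- Let G be a connected simple graph that is not complete. Then dim_nl(G) = 1 if and only if there exists a vertex x of G such that for every k with 0 ≤ k ≤ diam(G), the distance level L_k(x) = {u ∈ V(G) : d_G(x,u) = k} induces a complete subgraph of G. -/
lemma my_ediam_ne_top {V : Type*} [Fintype V] (G : SimpleGraph V) (hG : G.Connected) :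
    G.ediam ≠ ⊤ := by
  have : Nonempty V := hG.nonempty
  obtain ⟨u, v, huv⟩ := SimpleGraph.exists_edist_eq_ediam_of_finite (G := G)
  rw [← huv]
  exact SimpleGraph.edist_ne_top_iff_reachable.mpr (hG.preconnected u v)

/-- For a connected non-complete graph `G`, `dim_nl(G) = 1` iff
there is a vertex `x` all of whose distance levels `L_k(x)`, `0 ≤ k ≤ diam(G)`,
induce complete subgraphs. -/
theorem stmt_3 {V : Type*} [Fintype V] (G : SimpleGraph V) (hG : G.Connected)
    (hnc : G ≠ ⊤) :
    nldim G = 1 ↔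
      ∃ x : V, ∀ k : ℕ, k ≤ G.diam →
        ∀ u v : V, G.dist x u = k → G.dist x v = k → u ≠ v → G.Adj u v := by
  -- nonadjacent distinct pair exists since G ≠ ⊤
  have hpair : ∃ u v : V, u ≠ v ∧ ¬ G.Adj u v := by
    by_contra h
    push_neg at h
    apply hnc
    ext u v
    exact ⟨fun h' => h'.ne, fun h' => h u v h'⟩
  have h0 : (0 : ℕ) ∉ {n | ∃ X : Finset V, X.card = n ∧ IsNLResolving G X} := by
    rintro ⟨X, hX, hres⟩
    obtain ⟨u, v, huv, hadj⟩ := hpair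
    obtain ⟨x, hx, _⟩ := hres u v huv hadj
    rw [Finset.card_eq_zero] at hX
    simp [hX] at hx
  constructor
  · intro h
    have hne : {n | ∃ X : Finset V, X.card = n ∧ IsNLResolving G X}.Nonempty := by
      by_contra hne
      rw [Set.not_nonempty_iff_eq_empty] at hne
      rw [nldim, hne, Nat.sInf_empty] at h
      exact absurd h one_ne_zero.symm
    have := Nat.sInf_mem hne
    rw [nldim] at h
    rw [h] at this
    obtain ⟨X, hX, hres⟩ := this
    rw [Finset.card_eq_one] at hX
    obtain ⟨x, rfl⟩ := hX
    refine ⟨x, fun k _ u v hu hv huv => ?_⟩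
    by_contra hadj
    obtain ⟨y, hy, hne'⟩ := hres u v huv hadj
    rw [Finset.mem_singleton] at hy
    subst hy
    rw [SimpleGraph.dist_comm (u := u) (v := y), SimpleGraph.dist_comm (u := v) (v := y), hu, hv] at hne'
    exact hne' rfl
  · rintro ⟨x, hx⟩
    have h1 : (1 : ℕ) ∈ {n | ∃ X : Finset V, X.card = n ∧ IsNLResolving G X} := by
      refine ⟨{x}, Finset.card_singleton x, fun u v huv hadj => ?_⟩
      refine ⟨x, Finset.mem_singleton_self x, fun heq => hadj ?_⟩
      have hle : G.dist x u ≤ G.diam := by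
        rw [G.dist_comm]
        exact SimpleGraph.dist_le_diam (my_ediam_ne_top G hG)
      exact hx (G.dist x u) hle u v rfl (by rw [G.dist_comm, ← heq, G.dist_comm]) huv
    have hle : nldim G ≤ 1 := Nat.sInf_le h1
    have : nldim G ≠ 0 := fun h => h0 (h ▸ Nat.sInf_mem ⟨1, h1⟩)
    omega
end

section
/- If G is a connected bipartite simple graph with at least 3 vertices, then the nonlocal metric dimension of G equals the metric dimension of G, i.e., dim_nl(G) = dim(G). -/
open SimpleGraph in
lemma walk_parity_aux {V : Type*} {G : SimpleGraph V} {A : Set V}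
    (hbip : ∀ u v : V, G.Adj u v → ((u ∈ A ∧ v ∉ A) ∨ (u ∉ A ∧ v ∈ A)))
    {u v : V} (p : G.Walk u v) : Even p.length ↔ (u ∈ A ↔ v ∈ A) := by
  induction p with
  | nil => simp
  | cons h p ih =>
    rw [SimpleGraph.Walk.length_cons, Nat.even_add_one, ih]
    rcases hbip _ _ h with ⟨h1, h2⟩ | ⟨h1, h2⟩ <;> tauto

open SimpleGraph in
lemma adj_dist_ne_aux {V : Type*} {G : SimpleGraph V} (hG : G.Connected) {A : Set V}
    (hbip : ∀ u v : V, G.Adj u v → ((u ∈ A ∧ v ∉ A) ∨ (u ∉ A ∧ v ∈ A)))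
    {u v : V} (h : G.Adj u v) (x : V) : G.dist u x ≠ G.dist v x := by
  intro he
  obtain ⟨p, hp⟩ := hG.exists_walk_length_eq_dist u x
  obtain ⟨q, hq⟩ := hG.exists_walk_length_eq_dist v x
  have h1 := walk_parity_aux hbip p
  have h2 := walk_parity_aux hbip (SimpleGraph.Walk.cons h q)
  rw [SimpleGraph.Walk.length_cons, Nat.even_add_one] at h2
  rw [hp, hq, ← he, he] at *
  rcases hbip _ _ h with ⟨ha, hb⟩ | ⟨ha, hb⟩ <;> tauto

/-- For a connected bipartite graph `G` with at least `3`
vertices, `dim_nl(G) = dim(G)`. -/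
theorem stmt_4 {V : Type*} [Fintype V] (G : SimpleGraph V) (hG : G.Connected)
    (hn : 3 ≤ Fintype.card V)
    (hbip : ∃ A : Set V, ∀ u v : V, G.Adj u v →
      ((u ∈ A ∧ v ∉ A) ∨ (u ∉ A ∧ v ∈ A))) :
    nldim G = metricDim G := by
  obtain ⟨A, hA⟩ := hbip
  -- the universe is a resolving set
  have huniv : IsResolving G Finset.univ := by
    intro u v huv
    refine ⟨u, Finset.mem_univ u, ?_⟩
    have h1 : G.dist u u = 0 := SimpleGraph.dist_self
    have h2 : 0 < G.dist v u := hG.pos_dist_of_ne (Ne.symm huv)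
    omega
  -- existence of a nonadjacent distinct pair
  have hnadj : ∃ a b : V, a ≠ b ∧ ¬ G.Adj a b := by
    obtain ⟨f⟩ : Nonempty (Fin 3 ↪ V) :=
      Function.Embedding.nonempty_of_card_le (by simpa using hn)
    have key : ∀ a b : V, (a ∈ A ↔ b ∈ A) → ¬ G.Adj a b := by
      intro a b hab hadj
      rcases hA a b hadj with ⟨h1, h2⟩ | ⟨h1, h2⟩ <;> tauto
    by_cases h0 : f 0 ∈ A <;> by_cases h1 : f 1 ∈ A <;> by_cases h2 : f 2 ∈ A
    · exact ⟨f 0, f 1, fun h => by simpa using f.injective h, key _ _ (by tauto)⟩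
    · exact ⟨f 0, f 1, fun h => by simpa using f.injective h, key _ _ (by tauto)⟩
    · exact ⟨f 0, f 2, fun h => by simpa using f.injective h, key _ _ (by tauto)⟩
    · exact ⟨f 1, f 2, fun h => by simpa using f.injective h, key _ _ (by tauto)⟩
    · exact ⟨f 1, f 2, fun h => by simpa using f.injective h, key _ _ (by tauto)⟩
    · exact ⟨f 0, f 2, fun h => by simpa using f.injective h, key _ _ (by tauto)⟩
    · exact ⟨f 0, f 1, fun h => by simpa using f.injective h, key _ _ (by tauto)⟩
    · exact ⟨f 0, f 1, fun h => by simpa using f.injective h, key _ _ (by tauto)⟩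
  have hMne : {n | ∃ X : Finset V, X.card = n ∧ IsResolving G X}.Nonempty :=
    ⟨Finset.univ.card, Finset.univ, rfl, huniv⟩
  have hNne : {n | ∃ X : Finset V, X.card = n ∧ IsNLResolving G X}.Nonempty :=
    ⟨Finset.univ.card, Finset.univ, rfl, fun u v huv _ => huniv u v huv⟩
  apply le_antisymm
  · obtain ⟨X, hcard, hres⟩ := Nat.sInf_mem hMne
    exact Nat.sInf_le ⟨X, hcard, fun u v huv _ => hres u v huv⟩
  · obtain ⟨X, hcard, hres⟩ := Nat.sInf_mem hNne
    refine Nat.sInf_le ⟨X, hcard, ?_⟩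
    intro u v huv
    by_cases hadj : G.Adj u v
    · obtain ⟨a, b, hab, hnadj'⟩ := hnadj
      obtain ⟨x, hx, -⟩ := hres a b hab hnadj'
      exact ⟨x, hx, adj_dist_ne_aux hG hA hadj x⟩
    · exact hres u v huv hadj
end

section
/- If G is a connected simple graph and H is a simple graph that is not complete, then the nonlocal metric dimension of the corona product G ⊙ H equals n(G) · dim_nl(H + K_1), where n(G) is the number of vertices of G and H + K_1 is the join of H with a single vertex. -/
section Aux
open SimpleGraph
variable {V W : Type*} {G : SimpleGraph V} {H : SimpleGraph W}


open Classical in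
/-- claimed distance in corona -/
noncomputable def cD (G : SimpleGraph V) (H : SimpleGraph W) : (V ⊕ V × W) → (V ⊕ V × W) → ℕ
  | Sum.inl g, Sum.inl g' => G.dist g g'
  | Sum.inl g, Sum.inr q => G.dist g q.1 + 1
  | Sum.inr p, Sum.inl g => G.dist p.1 g + 1
  | Sum.inr p, Sum.inr q =>
      if p.1 = q.1 then (if p.2 = q.2 then 0 else if H.Adj p.2 q.2 then 1 else 2)
      else G.dist p.1 q.1 + 2

lemma dist_le_adj (hG : G.Connected) {g g' a : V} (h : G.Adj g g') :
    G.dist g a ≤ G.dist g' a + 1 := by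
  have t := hG.dist_triangle (u := g) (v := g') (w := a)
  have h1 : G.dist g g' = 1 := SimpleGraph.dist_eq_one_iff_adj.mpr h
  omega

lemma corona_adj_ll {g g' : V} : (corona G H).Adj (Sum.inl g) (Sum.inl g') ↔ G.Adj g g' := by
  simp only [corona, SimpleGraph.fromRel_adj]
  constructor
  · rintro ⟨-, h | h⟩
    · exact h
    · exact h.symm
  · exact fun h => ⟨by simp [h.ne], Or.inl h⟩

lemma corona_adj_lr {g : V} {q : V × W} : (corona G H).Adj (Sum.inl g) (Sum.inr q) ↔ g = q.1 := by
  simp only [corona, SimpleGraph.fromRel_adj]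
  constructor
  · rintro ⟨-, h | h⟩
    · exact h
    · exact h.elim
  · exact fun h => ⟨by simp, Or.inl h⟩

lemma corona_adj_rl {g : V} {q : V × W} : (corona G H).Adj (Sum.inr q) (Sum.inl g) ↔ g = q.1 := by
  rw [SimpleGraph.adj_comm]; exact corona_adj_lr

lemma corona_adj_rr {p q : V × W} :
    (corona G H).Adj (Sum.inr p) (Sum.inr q) ↔ p.1 = q.1 ∧ H.Adj p.2 q.2 := by
  simp only [corona, SimpleGraph.fromRel_adj]
  constructor
  · rintro ⟨-, ⟨h1, h2⟩ | ⟨h1, h2⟩⟩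
    · exact ⟨h1, h2⟩
    · exact ⟨h1.symm, h2.symm⟩
  · rintro ⟨h1, h2⟩
    refine ⟨?_, Or.inl ⟨h1, h2⟩⟩
    intro he
    rw [Sum.inr.injEq] at he
    exact h2.ne (congrArg Prod.snd he)

lemma cD_lip (hG : G.Connected) {u x : V ⊕ V × W} (h : (corona G H).Adj u x)
    (v : V ⊕ V × W) : cD G H u v ≤ cD G H x v + 1 := by
  rcases u with g | ⟨p1, p2⟩ <;> rcases x with g' | ⟨q1, q2⟩
  · rw [corona_adj_ll] at h
    rcases v with a | ⟨r1, r2⟩ <;> dsimp only [cD]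
    · exact dist_le_adj hG h
    · have := dist_le_adj hG h (a := r1); omega
  · rw [corona_adj_lr] at h
    dsimp only at h
    subst h
    rcases v with a | ⟨r1, r2⟩ <;> dsimp only [cD]
    · omega
    · by_cases h1 : g = r1
      · have : G.dist g r1 = 0 := by rw [h1, SimpleGraph.dist_self]
        split_ifs <;> omega
      · split_ifs <;> omega
  · rw [corona_adj_rl] at h
    dsimp only at h
    subst h
    rcases v with a | ⟨r1, r2⟩ <;> dsimp only [cD]
    · omega
    · by_cases h1 : g' = r1
      · have : G.dist g' r1 = 0 := by rw [h1, SimpleGraph.dist_self]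
        split_ifs <;> omega
      · split_ifs <;> omega
  · rw [corona_adj_rr] at h
    obtain ⟨h1, h2⟩ := h
    dsimp only at h1 h2
    subst h1
    rcases v with a | ⟨r1, r2⟩ <;> dsimp only [cD]
    · omega
    · by_cases hp : p1 = r1
      · rw [if_pos hp, if_pos hp]
        by_cases hq : q2 = r2
        · subst hq
          rw [if_pos rfl, if_neg h2.ne, if_pos h2]
        · rw [if_neg hq]
          split_ifs <;> omega
      · rw [if_neg hp, if_neg hp]
        omega

lemma cD_self (v : V ⊕ V × W) : cD G H v v = 0 := by
  rcases v with g | p <;> simp [cD]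

lemma cD_le_length (hG : G.Connected) {u v : V ⊕ V × W} (p : (corona G H).Walk u v) :
    cD G H u v ≤ p.length := by
  induction p with
  | nil => simp [cD_self]
  | cons h p ih =>
      calc cD G H _ _ ≤ cD G H _ _ + 1 := cD_lip hG h _
      _ ≤ p.length + 1 := by omega

/-- embedding of G into corona -/
def ιc (G : SimpleGraph V) (H : SimpleGraph W) : G →g corona G H :=
  ⟨Sum.inl, fun h => corona_adj_ll.mpr h⟩

lemma corona_connected (hG : G.Connected) : (corona G H).Connected := by
  have hr : ∀ g g' : V, (corona G H).Reachable (Sum.inl g) (Sum.inl g') := by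
    intro g g'
    exact (hG g g').map (ιc G H)
  have hr2 : ∀ p : V × W, (corona G H).Reachable (Sum.inr p) (Sum.inl p.1) := by
    intro p
    exact (SimpleGraph.Adj.reachable (corona_adj_rl.mpr rfl))
  have hne : Nonempty (V ⊕ V × W) := ⟨Sum.inl hG.nonempty.some⟩
  constructor
  intro u v
  rcases u with g | p <;> rcases v with g' | q
  · exact hr g g'
  · exact (hr g q.1).trans (hr2 q).symm
  · exact (hr2 p).trans (hr p.1 g')
  · exact ((hr2 p).trans (hr p.1 q.1)).trans (hr2 q).symm

lemma corona_dist (hG : G.Connected) (u v : V ⊕ V × W) :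
    (corona G H).dist u v = cD G H u v := by
  have hc := corona_connected (H := H) hG
  refine le_antisymm ?_ ?_
  · -- upper bound: construct walks
    have wll : ∀ g g' : V, ∃ q : (corona G H).Walk (Sum.inl g) (Sum.inl g'),
        q.length = G.dist g g' := by
      intro g g'
      obtain ⟨p, hp⟩ := hG.exists_walk_length_eq_dist g g'
      exact ⟨p.map (ιc G H), (SimpleGraph.Walk.length_map _ _).trans hp⟩
    rcases u with g | ⟨p1, p2⟩ <;> rcases v with g' | ⟨q1, q2⟩ <;> dsimp only [cD]
    · obtain ⟨q, hq⟩ := wll g g'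
      exact hq ▸ SimpleGraph.dist_le q
    · obtain ⟨q, hq⟩ := wll g q1
      have := SimpleGraph.dist_le
        (q.concat (corona_adj_lr.mpr rfl : (corona G H).Adj (Sum.inl q1) (Sum.inr (q1, q2))))
      rw [SimpleGraph.Walk.length_concat, hq] at this
      exact this
    · obtain ⟨q, hq⟩ := wll p1 g'
      have hA : (corona G H).Adj (Sum.inr (p1, p2)) (Sum.inl p1) := corona_adj_rl.mpr rfl
      have := SimpleGraph.dist_le (SimpleGraph.Walk.cons hA q)
      rw [SimpleGraph.Walk.length_cons, hq] at this
      exact this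
    · by_cases hp : p1 = q1
      · subst hp
        by_cases he : p2 = q2
        · subst he; rw [if_pos rfl, if_pos rfl, SimpleGraph.dist_self]
        · rw [if_pos rfl, if_neg he]
          by_cases ha : H.Adj p2 q2
          · rw [if_pos ha]
            have : (corona G H).Adj (Sum.inr (p1, p2)) (Sum.inr (p1, q2)) :=
              corona_adj_rr.mpr ⟨rfl, ha⟩
            exact SimpleGraph.dist_eq_one_iff_adj.mpr this ▸ le_refl _
          · rw [if_neg ha]
            have hA : (corona G H).Adj (Sum.inr (p1, p2)) (Sum.inl p1) := corona_adj_rl.mpr rfl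
            have hB : (corona G H).Adj (Sum.inl p1) (Sum.inr (p1, q2)) := corona_adj_lr.mpr rfl
            have := SimpleGraph.dist_le
              (SimpleGraph.Walk.cons hA (SimpleGraph.Walk.cons hB SimpleGraph.Walk.nil))
            simpa using this
      · rw [if_neg hp]
        obtain ⟨q, hq⟩ := wll p1 q1
        have hA : (corona G H).Adj (Sum.inr (p1, p2)) (Sum.inl p1) := corona_adj_rl.mpr rfl
        have hB : (corona G H).Adj (Sum.inl q1) (Sum.inr (q1, q2)) := corona_adj_lr.mpr rfl
        have := SimpleGraph.dist_le (SimpleGraph.Walk.cons hA (q.concat hB))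
        rw [SimpleGraph.Walk.length_cons, SimpleGraph.Walk.length_concat, hq] at this
        omega
  · obtain ⟨p, hp⟩ := (hc u v).exists_walk_length_eq_dist
    exact hp ▸ cD_le_length hG p

lemma joinK1_adj_ns {w : W} : (joinK1 H).Adj none (some w) := by
  simp only [joinK1, SimpleGraph.fromRel_adj]
  exact ⟨by simp, Or.inl (Or.inl (by simp))⟩

lemma joinK1_adj_ss {w w' : W} : (joinK1 H).Adj (some w) (some w') ↔ H.Adj w w' := by
  simp only [joinK1, SimpleGraph.fromRel_adj]
  constructor
  · rintro ⟨hne, (h | ⟨a, b, ha, hb, hab⟩) | (h | ⟨a, b, ha, hb, hab⟩)⟩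
    · exact absurd h (by simp)
    · rw [Option.some.injEq] at ha hb; rw [← ha, ← hb] at hab; exact hab
    · exact absurd h (by simp)
    · rw [Option.some.injEq] at ha hb; rw [← ha, ← hb] at hab; exact hab.symm
  · intro h
    exact ⟨by simp [h.ne], Or.inl (Or.inr ⟨w, w', rfl, rfl, h⟩)⟩

lemma joinK1_connected : (joinK1 H).Connected := by
  have hne : Nonempty (Option W) := ⟨none⟩
  constructor
  intro u v
  have hr : ∀ a : Option W, (joinK1 H).Reachable none a := by
    intro a
    rcases a with _ | w
    · rfl
    · exact (joinK1_adj_ns).reachable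
  exact (hr u).symm.trans (hr v)

open Classical in
noncomputable def jD (H : SimpleGraph W) : Option W → Option W → ℕ
  | none, none => 0
  | none, some _ => 1
  | some _, none => 1
  | some w, some w' => if w = w' then 0 else if H.Adj w w' then 1 else 2

lemma jD_lip {u x : Option W} (h : (joinK1 H).Adj u x) (v : Option W) :
    jD H u v ≤ jD H x v + 1 := by
  rcases u with _ | w <;> rcases x with _ | w'
  · exact absurd h (joinK1 H).irrefl
  · rcases v with _ | a <;> dsimp only [jD]
    · omega
    · split_ifs <;> omega
  · rcases v with _ | a <;> dsimp only [jD]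
    · omega
    · split_ifs <;> omega
  · rw [joinK1_adj_ss] at h
    rcases v with _ | a <;> dsimp only [jD]
    · omega
    · by_cases hw : w' = a
      · subst hw
        rw [if_neg h.ne, if_pos h, if_pos rfl]
      · rw [if_neg hw]
        split_ifs <;> omega

lemma jD_self (v : Option W) : jD H v v = 0 := by
  rcases v with _ | w <;> simp [jD]

lemma jD_le_length {u v : Option W} (p : (joinK1 H).Walk u v) :
    jD H u v ≤ p.length := by
  induction p with
  | nil => simp [jD_self]
  | cons h p ih =>
      calc jD H _ _ ≤ jD H _ _ + 1 := jD_lip h _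
      _ ≤ p.length + 1 := by omega

lemma joinK1_dist (u v : Option W) : (joinK1 H).dist u v = jD H u v := by
  refine le_antisymm ?_ ?_
  · rcases u with _ | w <;> rcases v with _ | w' <;> dsimp only [jD]
    · simp
    · exact SimpleGraph.dist_eq_one_iff_adj.mpr joinK1_adj_ns ▸ le_refl _
    · exact SimpleGraph.dist_eq_one_iff_adj.mpr joinK1_adj_ns.symm ▸ le_refl _
    · by_cases he : w = w'
      · subst he; simp
      · rw [if_neg he]
        by_cases ha : H.Adj w w'
        · rw [if_pos ha]
          exact SimpleGraph.dist_eq_one_iff_adj.mpr (joinK1_adj_ss.mpr ha) ▸ le_refl _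
        · rw [if_neg ha]
          have hA : (joinK1 H).Adj (some w) none := joinK1_adj_ns.symm
          have hB : (joinK1 H).Adj none (some w') := joinK1_adj_ns
          have := SimpleGraph.dist_le
            (SimpleGraph.Walk.cons hA (SimpleGraph.Walk.cons hB SimpleGraph.Walk.nil))
          simpa using this
  · obtain ⟨p, hp⟩ := (joinK1_connected u v).exists_walk_length_eq_dist
    exact hp ▸ jD_le_length p


lemma nl_univ [Fintype V] (hc : G.Connected) : IsNLResolving G Finset.univ := by
  intro u v hne _
  refine ⟨u, Finset.mem_univ _, ?_⟩
  rw [SimpleGraph.dist_self]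
  exact (hc.pos_dist_of_ne (Ne.symm hne)).ne

lemma nldim_exists [Fintype V] (hc : G.Connected) :
    ∃ X : Finset V, X.card = nldim G ∧ IsNLResolving G X := by
  have hne : {n | ∃ X : Finset V, X.card = n ∧ IsNLResolving G X}.Nonempty :=
    ⟨Finset.univ.card, Finset.univ, rfl, nl_univ hc⟩
  exact Nat.sInf_mem hne

lemma nldim_le [Fintype V] {X : Finset V} (h : IsNLResolving G X) : nldim G ≤ X.card :=
  Nat.sInf_le ⟨X, rfl, h⟩

end Aux

/-- If `G` is connected and `H` is not complete, then
`dim_nl(G ⊙ H) = n(G) · dim_nl(H + K₁)`. -/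
theorem stmt_5 {V W : Type*} [Fintype V] [Fintype W]
    (G : SimpleGraph V) (H : SimpleGraph W)
    (hG : G.Connected) (hH : H ≠ ⊤) :
    nldim (corona G H) = Fintype.card V * nldim (joinK1 H) := by
  classical
  have hCc : (corona G H).Connected := corona_connected hG
  have hJc : (joinK1 H).Connected := joinK1_connected
  -- a non-adjacent pair in H
  obtain ⟨w₀, w₁, hw01, hnadj01⟩ : ∃ w₀ w₁ : W, w₀ ≠ w₁ ∧ ¬ H.Adj w₀ w₁ := by
    by_contra hcon
    push_neg at hcon
    apply hH
    ext u v
    simp only [SimpleGraph.top_adj]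
    exact ⟨fun h => h.ne, fun hne => hcon u v hne⟩
  set m := nldim (joinK1 H) with hm
  obtain ⟨X₀, hX₀card, hX₀⟩ := nldim_exists hJc
  set S : Finset W := Finset.univ.filter (fun w => some w ∈ X₀) with hS
  have hScard : S.card ≤ m := by
    rw [hm, ← hX₀card]
    apply Finset.card_le_card_of_injOn (fun w => some w)
    · intro w hw
      exact (Finset.mem_filter.mp hw).2
    · intro a _ b _ hab
      exact Option.some_injective W hab
  have hSres : ∀ w w' : W, w ≠ w' → ¬ H.Adj w w' →
      ∃ s ∈ S, jD H (some w) (some s) ≠ jD H (some w') (some s) := by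
    intro w w' hne hna
    have hnadj : ¬ (joinK1 H).Adj (some w) (some w') := fun h => hna (joinK1_adj_ss.mp h)
    obtain ⟨x, hxX, hxd⟩ := hX₀ (some w) (some w') (by simp [hne]) hnadj
    rcases x with _ | s
    · exact absurd (by rw [joinK1_dist, joinK1_dist]; rfl : (joinK1 H).dist (some w) none = (joinK1 H).dist (some w') none) hxd
    · refine ⟨s, ?_, ?_⟩
      · simp only [hS, Finset.mem_filter]
        exact ⟨Finset.mem_univ _, hxX⟩
      · rw [joinK1_dist, joinK1_dist] at hxd
        exact hxd
  obtain ⟨s₀, hs₀⟩ : ∃ s₀, s₀ ∈ S := by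
    obtain ⟨s, hs, -⟩ := hSres w₀ w₁ hw01 hnadj01
    exact ⟨s, hs⟩
  refine le_antisymm ?_ ?_
  · -- upper bound
    set X : Finset (V ⊕ V × W) := (Finset.univ ×ˢ S).image Sum.inr with hX
    have hmem : ∀ g s, s ∈ S → Sum.inr (g, s) ∈ X := fun g s hs =>
      Finset.mem_image.mpr ⟨(g, s), Finset.mem_product.mpr ⟨Finset.mem_univ _, hs⟩, rfl⟩
    have hres : IsNLResolving (corona G H) X := by
      intro u v huv hnadj
      rcases u with g | ⟨p1, p2⟩ <;> rcases v with g' | ⟨q1, q2⟩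
      · have hgg : g ≠ g' := fun h => huv (by rw [h])
        refine ⟨Sum.inr (g, s₀), hmem g s₀ hs₀, ?_⟩
        rw [corona_dist hG, corona_dist hG]
        dsimp only [cD]
        have h1 : G.dist g g = 0 := SimpleGraph.dist_self
        have h2 : 0 < G.dist g' g := hG.pos_dist_of_ne (Ne.symm hgg)
        omega
      · have hgq : g ≠ q1 := fun h => hnadj (corona_adj_lr.mpr h)
        refine ⟨Sum.inr (g, s₀), hmem g s₀ hs₀, ?_⟩
        rw [corona_dist hG, corona_dist hG]
        dsimp only [cD]
        rw [if_neg (fun h => hgq h.symm)]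
        have h1 : G.dist g g = 0 := SimpleGraph.dist_self
        have h2 : 0 < G.dist q1 g := hG.pos_dist_of_ne (fun h => hgq h.symm)
        omega
      · have hgq : g' ≠ p1 := fun h => hnadj (corona_adj_rl.mpr h)
        refine ⟨Sum.inr (g', s₀), hmem g' s₀ hs₀, ?_⟩
        rw [corona_dist hG, corona_dist hG]
        dsimp only [cD]
        rw [if_neg (fun h => hgq h.symm)]
        have h1 : G.dist g' g' = 0 := SimpleGraph.dist_self
        have h2 : 0 < G.dist p1 g' := hG.pos_dist_of_ne (fun h => hgq h.symm)
        omega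
      · by_cases hpq : p1 = q1
        · subst hpq
          have hne2 : p2 ≠ q2 := fun h => huv (by rw [h])
          have hnadjH : ¬ H.Adj p2 q2 := fun h => hnadj (corona_adj_rr.mpr ⟨rfl, h⟩)
          obtain ⟨s, hsS, hsd⟩ := hSres p2 q2 hne2 hnadjH
          refine ⟨Sum.inr (p1, s), hmem p1 s hsS, ?_⟩
          rw [corona_dist hG, corona_dist hG]
          dsimp only [cD]
          rw [if_pos rfl, if_pos rfl]
          dsimp only [jD] at hsd
          convert hsd using 2
        · refine ⟨Sum.inr (p1, s₀), hmem p1 s₀ hs₀, ?_⟩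
          rw [corona_dist hG, corona_dist hG]
          dsimp only [cD]
          rw [if_neg (show ¬q1 = p1 from fun h => hpq h.symm), if_pos (show p1 = p1 from rfl)]
          have h2 : 0 < G.dist q1 p1 := hG.pos_dist_of_ne (fun h => hpq h.symm)
          split_ifs <;> omega
    calc nldim (corona G H) ≤ X.card := nldim_le hres
      _ = (Finset.univ ×ˢ S).card := Finset.card_image_of_injective _ Sum.inr_injective
      _ = Fintype.card V * S.card := by rw [Finset.card_product, Finset.card_univ]
      _ ≤ Fintype.card V * m := Nat.mul_le_mul_left _ hScard
  · -- lower bound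
    obtain ⟨X, hXcard, hXres⟩ := nldim_exists hCc
    rw [← hXcard]
    have key : ∀ g : V, m ≤ (Finset.univ.filter (fun w => Sum.inr (g, w) ∈ X)).card := by
      intro g
      set Sg : Finset W := Finset.univ.filter (fun w => Sum.inr (g, w) ∈ X) with hSg
      have hres : IsNLResolving (joinK1 H) (Sg.image some) := by
        intro u v huv hnadj
        rcases u with _ | w <;> rcases v with _ | w'
        · exact absurd rfl huv
        · exact absurd joinK1_adj_ns hnadj
        · exact absurd joinK1_adj_ns.symm hnadj
        · have hwne : w ≠ w' := fun h => huv (by rw [h])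
          have hna : ¬ H.Adj w w' := fun h => hnadj (joinK1_adj_ss.mpr h)
          have hne2 : (Sum.inr (g, w) : V ⊕ V × W) ≠ Sum.inr (g, w') := by simp [hwne]
          have hnadj2 : ¬ (corona G H).Adj (Sum.inr (g, w)) (Sum.inr (g, w')) :=
            fun h => hna (corona_adj_rr.mp h).2
          obtain ⟨x, hxX, hxd⟩ := hXres _ _ hne2 hnadj2
          rw [corona_dist hG, corona_dist hG] at hxd
          rcases x with a | ⟨a1, a2⟩
          · exact absurd rfl hxd
          · by_cases hag : a1 = g
            · subst hag
              refine ⟨some a2, ?_, ?_⟩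
              · apply Finset.mem_image_of_mem
                simp only [hSg, Finset.mem_filter]
                exact ⟨Finset.mem_univ _, hxX⟩
              · rw [joinK1_dist, joinK1_dist]
                dsimp only [cD] at hxd
                rw [if_pos rfl, if_pos rfl] at hxd
                dsimp only [jD]
                convert hxd using 2
            · exfalso
              apply hxd
              dsimp only [cD]
              rw [if_neg (fun h => hag h.symm), if_neg (fun h => hag h.symm)]
      calc m ≤ (Sg.image some).card := nldim_le hres
        _ = Sg.card := Finset.card_image_of_injective _ (Option.some_injective W)
    set P : Finset (V × W) := Finset.univ.filter (fun p => Sum.inr p ∈ X) with hP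
    have hPX : P.card ≤ X.card := by
      apply Finset.card_le_card_of_injOn Sum.inr
      · intro p hp
        exact (Finset.mem_filter.mp hp).2
      · intro a _ b _ hab
        exact Sum.inr_injective hab
    have hPsum : P.card = ∑ g : V, (Finset.univ.filter (fun w => Sum.inr (g, w) ∈ X)).card := by
      rw [Finset.card_eq_sum_card_fiberwise (f := Prod.fst) (t := Finset.univ)
        (fun x _ => Finset.mem_univ _)]
      refine Finset.sum_congr rfl fun g _ => ?_
      apply Finset.card_bij' (fun (p : V × W) _ => p.2) (fun w _ => (g, w))
      · intro p hp
        simp only [hP, Finset.mem_filter, Finset.mem_univ, true_and] at hp ⊢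
        obtain ⟨h1, h2⟩ := hp
        rw [← h2]
        exact h1
      · intro w hw
        simp only [hP, Finset.mem_filter, Finset.mem_univ, true_and] at hw
        simp only [hP, Finset.mem_filter, Finset.mem_univ, true_and]
        exact ⟨hw, by simp⟩
      · intro p hp
        simp only [hP, Finset.mem_filter] at hp
        rw [Prod.ext_iff]
        exact ⟨hp.2.symm, rfl⟩
      · intro w _
        rfl
    calc Fintype.card V * m = ∑ _g : V, m := by
          rw [Finset.sum_const, Finset.card_univ, smul_eq_mul]
      _ ≤ ∑ g : V, (Finset.univ.filter (fun w => Sum.inr (g, w) ∈ X)).card :=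
          Finset.sum_le_sum fun g _ => key g
      _ = P.card := hPsum.symm
      _ ≤ X.card := hPX
end

section
/- If G is a connected simple graph and n ≥ 1, then dim(G) ≤ dim_nl(G ⊙ K_n) ≤ n(G), where G ⊙ K_n is the corona product of G with the complete graph K_n and n(G) is the number of vertices of G. -/
open SimpleGraph Sum

section Corona

variable {V W : Type*} {G : SimpleGraph V} {H : SimpleGraph W}

lemma corona_adj_inl_inl {g g' : V} :
    (corona G H).Adj (inl g) (inl g') ↔ G.Adj g g' := by
  constructor
  · rintro ⟨-, h | h⟩
    · exact h
    · exact h.symm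
  · intro h
    exact ⟨by simp [h.ne], Or.inl h⟩

lemma corona_adj_inl_inr {g : V} {p : V × W} :
    (corona G H).Adj (inl g) (inr p) ↔ g = p.1 := by
  constructor
  · rintro ⟨-, h | h⟩
    · exact h
    · exact h.elim
  · intro h
    exact ⟨by simp, Or.inl h⟩

lemma corona_adj_inr_inr {p q : V × W} :
    (corona G H).Adj (inr p) (inr q) ↔ p.1 = q.1 ∧ H.Adj p.2 q.2 := by
  constructor
  · rintro ⟨-, ⟨h1, h2⟩ | ⟨h1, h2⟩⟩
    · exact ⟨h1, h2⟩
    · exact ⟨h1.symm, h2.symm⟩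
  · rintro ⟨h1, h2⟩
    refine ⟨?_, Or.inl ⟨h1, h2⟩⟩
    intro hpq
    exact h2.ne (congrArg Prod.snd (inr_injective hpq))

/-- projection to the base graph `G` -/
def cproj : V ⊕ V × W → V := Sum.elim id Prod.fst

/-- marker: 0 for base vertices, 1 for copy vertices -/
def cr : V ⊕ V × W → ℕ := Sum.elim (fun _ => 0) (fun _ => 1)

@[simp] lemma cproj_inl (g : V) : cproj (Sum.inl g : V ⊕ V × W) = g := rfl
@[simp] lemma cproj_inr (p : V × W) : cproj (Sum.inr p : V ⊕ V × W) = p.1 := rfl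
@[simp] lemma cr_inl (g : V) : cr (Sum.inl g : V ⊕ V × W) = 0 := rfl
@[simp] lemma cr_inr (p : V × W) : cr (Sum.inr p : V ⊕ V × W) = 1 := rfl

lemma corona_adj_cases {a b : V ⊕ V × W} (h : (corona G H).Adj a b) :
    cproj a = cproj b ∨ (G.Adj (cproj a) (cproj b) ∧ cr a = 0 ∧ cr b = 0) := by
  cases a with
  | inl g =>
    cases b with
    | inl g' => exact Or.inr ⟨corona_adj_inl_inl.mp h, rfl, rfl⟩
    | inr p => exact Or.inl (corona_adj_inl_inr.mp h)
  | inr p =>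
    cases b with
    | inl g => exact Or.inl (corona_adj_inl_inr.mp h.symm).symm
    | inr q => exact Or.inl (corona_adj_inr_inr.mp h).1

lemma corona_walk_lower (hG : G.Connected) {a b : V ⊕ V × W}
    (w : (corona G H).Walk a b) :
    cproj a ≠ cproj b → G.dist (cproj a) (cproj b) + cr a + cr b ≤ w.length := by
  induction w with
  | nil => intro hne; exact absurd rfl hne
  | @cons a c b hadj w ih =>
    intro hne
    rw [SimpleGraph.Walk.length_cons]
    rcases corona_adj_cases hadj with hpc | ⟨hadj', hra, hrc⟩
    · have h2 : cproj c ≠ cproj b := fun h => hne (hpc.trans h)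
      have hih := ih h2
      have hra : cr a ≤ 1 := by cases a <;> simp [cr]
      rw [hpc]
      omega
    · by_cases hcb : cproj c = cproj b
      · have hd : G.dist (cproj a) (cproj b) = 1 := by
          rw [← hcb]; exact SimpleGraph.dist_eq_one_iff_adj.mpr hadj'
        rcases Nat.eq_zero_or_pos w.length with h0 | hpos
        · have hcb' : c = b := SimpleGraph.Walk.eq_of_length_eq_zero h0
          subst hcb'
          omega
        · have hrb : cr b ≤ 1 := by cases b <;> simp [cr]
          omega
      · have hih := ih hcb
        have htri := hG.dist_triangle (u := cproj a) (v := cproj c) (w := cproj b)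
        have h1 : G.dist (cproj a) (cproj c) = 1 :=
          SimpleGraph.dist_eq_one_iff_adj.mpr hadj'
        omega

/-- `Sum.inl` as a graph homomorphism `G →g corona G H`. -/
def coronaInl (G : SimpleGraph V) (H : SimpleGraph W) : G →g corona G H where
  toFun := inl
  map_rel' := fun h => corona_adj_inl_inl.mpr h

lemma corona_dist_inl_inr (hG : G.Connected) (g h : V) (j : W) :
    (corona G H).dist (inl g) (inr (h, j)) = G.dist g h + 1 := by
  obtain ⟨p, hp⟩ := hG.exists_walk_length_eq_dist g h
  have hadj : (corona G H).Adj (inl h) (inr (h, j)) := corona_adj_inl_inr.mpr rfl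
  have hle : (corona G H).dist (inl g) (inr (h, j)) ≤ G.dist g h + 1 := by
    have := SimpleGraph.dist_le ((p.map (coronaInl G H)).concat hadj)
    erw [SimpleGraph.Walk.length_concat, SimpleGraph.Walk.length_map, hp] at this
    exact this
  rcases eq_or_ne g h with rfl | hgh
  · have h1 : (corona G H).dist (inl g) (inr (g, j)) = 1 :=
      SimpleGraph.dist_eq_one_iff_adj.mpr hadj
    rw [h1, SimpleGraph.dist_self]
  · have hr : (corona G H).Reachable (inl g) (inr (h, j)) :=
      ⟨(p.map (coronaInl G H)).concat hadj⟩
    obtain ⟨q, hq⟩ := hr.exists_walk_length_eq_dist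
    have := corona_walk_lower hG q (by simpa using hgh)
    simp only [cproj_inl, cproj_inr, cr_inl, cr_inr] at this
    omega

lemma corona_dist_inr_inr (hG : G.Connected) {g h : V} (hgh : g ≠ h) (i j : W) :
    (corona G H).dist (inr (g, i)) (inr (h, j)) = G.dist g h + 2 := by
  obtain ⟨p, hp⟩ := hG.exists_walk_length_eq_dist g h
  have hadj1 : (corona G H).Adj (inr (g, i)) (inl g) :=
    (corona_adj_inl_inr.mpr rfl).symm
  have hadj2 : (corona G H).Adj (inl h) (inr (h, j)) := corona_adj_inl_inr.mpr rfl
  set w := SimpleGraph.Walk.cons hadj1 ((p.map (coronaInl G H)).concat hadj2)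
  have hle : (corona G H).dist (inr (g, i)) (inr (h, j)) ≤ G.dist g h + 2 := by
    have := SimpleGraph.dist_le w
    simp only [w] at this
    erw [SimpleGraph.Walk.length_cons, SimpleGraph.Walk.length_concat,
      SimpleGraph.Walk.length_map, hp] at this
    omega
  have hr : (corona G H).Reachable (inr (g, i)) (inr (h, j)) := ⟨w⟩
  obtain ⟨q, hq⟩ := hr.exists_walk_length_eq_dist
  have := corona_walk_lower hG q (by simpa using hgh)
  simp only [cproj_inr, cr_inr] at this
  omega

end Corona


/-- If `G` is connected and `n ≥ 1`, then
`dim(G) ≤ dim_nl(G ⊙ Kₙ) ≤ n(G)`. -/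
theorem stmt_6 {V : Type*} [Fintype V] (G : SimpleGraph V) (hG : G.Connected)
    (n : ℕ) (hn : 1 ≤ n) :
    metricDim G ≤ nldim (corona G (⊤ : SimpleGraph (Fin n))) ∧
      nldim (corona G (⊤ : SimpleGraph (Fin n))) ≤ Fintype.card V := by
  classical
  set C := corona G (⊤ : SimpleGraph (Fin n)) with hCdef
  set z : Fin n := ⟨0, hn⟩ with hz
  -- the canonical nonlocal resolving set: one vertex in each copy of `Kₙ`
  set X : Finset (V ⊕ V × Fin n) := Finset.univ.image (fun v => Sum.inr (v, z)) with hX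
  have hXcard : X.card = Fintype.card V := by
    rw [hX, Finset.card_image_of_injective _ (fun a b h => by simpa using h),
      Finset.card_univ]
  have hmemX : ∀ g : V, Sum.inr (g, z) ∈ X := fun g =>
    Finset.mem_image.mpr ⟨g, Finset.mem_univ g, rfl⟩
  have hXres : IsNLResolving C X := by
    rintro (g | ⟨g, i⟩) (g' | ⟨h, j⟩) huv hadj
    · -- both base vertices
      refine ⟨Sum.inr (g, z), hmemX g, ?_⟩
      have hgg' : g' ≠ g := fun h => huv (by rw [h])
      have h1 : C.dist (Sum.inl g) (Sum.inr (g, z)) = G.dist g g + 1 :=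
        corona_dist_inl_inr hG g g z
      have h2 : C.dist (Sum.inl g') (Sum.inr (g, z)) = G.dist g' g + 1 :=
        corona_dist_inl_inr hG g' g z
      have hp : 0 < G.dist g' g := hG.pos_dist_of_ne hgg'
      rw [h1, h2, SimpleGraph.dist_self]
      omega
    · -- base vertex and copy vertex
      have hgh : h ≠ g := fun he => hadj (corona_adj_inl_inr.mpr he.symm)
      refine ⟨Sum.inr (g, z), hmemX g, ?_⟩
      have h1 : C.dist (Sum.inl g) (Sum.inr (g, z)) = G.dist g g + 1 :=
        corona_dist_inl_inr hG g g z
      have h2 : C.dist (Sum.inr (h, j)) (Sum.inr (g, z)) = G.dist h g + 2 :=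
        corona_dist_inr_inr hG hgh j z
      have hp : 0 < G.dist h g := hG.pos_dist_of_ne hgh
      rw [h1, h2, SimpleGraph.dist_self]
      omega
    · -- copy vertex and base vertex
      have hgh : g ≠ g' := fun he => hadj ((corona_adj_inl_inr.mpr he.symm).symm)
      refine ⟨Sum.inr (g', z), hmemX g', ?_⟩
      have h1 : C.dist (Sum.inl g') (Sum.inr (g', z)) = G.dist g' g' + 1 :=
        corona_dist_inl_inr hG g' g' z
      have h2 : C.dist (Sum.inr (g, i)) (Sum.inr (g', z)) = G.dist g g' + 2 :=
        corona_dist_inr_inr hG hgh i z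
      have hp : 0 < G.dist g g' := hG.pos_dist_of_ne hgh
      rw [h1, h2, SimpleGraph.dist_self]
      omega
    · -- two copy vertices
      have hgh : g ≠ h := by
        rintro rfl
        have hij : i ≠ j := fun he => huv (by rw [he])
        exact hadj (corona_adj_inr_inr.mpr ⟨rfl, (SimpleGraph.top_adj i j).mpr hij⟩)
      refine ⟨Sum.inr (g, z), hmemX g, ?_⟩
      have h2 : C.dist (Sum.inr (h, j)) (Sum.inr (g, z)) = G.dist h g + 2 :=
        corona_dist_inr_inr hG (Ne.symm hgh) j z
      have hp : 0 < G.dist h g := hG.pos_dist_of_ne (Ne.symm hgh)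
      have h1 : C.dist (Sum.inr (g, i)) (Sum.inr (g, z)) ≤ 1 := by
        by_cases hi : i = z
        · rw [hi, SimpleGraph.dist_self]; omega
        · have hadj1 : C.Adj (Sum.inr (g, i)) (Sum.inr (g, z)) :=
            corona_adj_inr_inr.mpr ⟨rfl, (SimpleGraph.top_adj i z).mpr hi⟩
          rw [SimpleGraph.dist_eq_one_iff_adj.mpr hadj1]
      omega
  refine ⟨?_, Nat.sInf_le ⟨X, hXcard, hXres⟩⟩
  -- lower bound
  have hTne : {m | ∃ Y : Finset (V ⊕ V × Fin n), Y.card = m ∧ IsNLResolving C Y}.Nonempty :=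
    ⟨X.card, X, rfl, hXres⟩
  obtain ⟨X0, hX0card, hX0⟩ := Nat.sInf_mem hTne
  have hYres : IsResolving G (X0.image cproj) := by
    intro g g' hne'
    obtain ⟨x, hxX, hdx⟩ := hX0 (Sum.inr (g, z)) (Sum.inr (g', z))
      (by simp [hne']) (fun hadj => hne' (corona_adj_inr_inr.mp hadj).1)
    refine ⟨cproj x, Finset.mem_image_of_mem _ hxX, ?_⟩
    by_cases h1 : cproj x = g
    · rw [h1, SimpleGraph.dist_self]
      exact (hG.pos_dist_of_ne (Ne.symm hne')).ne
    by_cases h2 : cproj x = g'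
    · rw [h2, SimpleGraph.dist_self]
      exact (hG.pos_dist_of_ne hne').ne'
    obtain (p | ⟨p, j⟩) := x
    · simp only [cproj_inl] at h1 h2 ⊢
      have e1 : C.dist (Sum.inr (g, z)) (Sum.inl p) = G.dist g p + 1 := by
        rw [SimpleGraph.dist_comm, corona_dist_inl_inr hG p g z, SimpleGraph.dist_comm]
      have e2 : C.dist (Sum.inr (g', z)) (Sum.inl p) = G.dist g' p + 1 := by
        rw [SimpleGraph.dist_comm, corona_dist_inl_inr hG p g' z, SimpleGraph.dist_comm]
      intro heq
      exact hdx (by rw [e1, e2, heq])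
    · simp only [cproj_inr] at h1 h2 ⊢
      have e1 : C.dist (Sum.inr (g, z)) (Sum.inr (p, j)) = G.dist g p + 2 :=
        corona_dist_inr_inr hG (fun he => h1 (he.symm)) z j
      have e2 : C.dist (Sum.inr (g', z)) (Sum.inr (p, j)) = G.dist g' p + 2 :=
        corona_dist_inr_inr hG (fun he => h2 (he.symm)) z j
      intro heq
      exact hdx (by rw [e1, e2, heq])
  calc metricDim G ≤ (X0.image cproj).card := Nat.sInf_le ⟨X0.image cproj, rfl, hYres⟩
    _ ≤ X0.card := Finset.card_image_le
    _ = nldim C := hX0card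
end

section
/- For every integer n ≥ 7, the nonlocal metric dimension of the wheel W_{1,n} equals ⌊2n/5⌋. -/
namespace NLW

open scoped Fin.NatCast Fin.IntCast Fin.CommRing

variable {m : ℕ}

/-! ### Fin arithmetic toolkit -/

lemma natCastFin_inj {a b : ℕ} (ha : a < m+7) (hb : b < m+7) :
    (a : Fin (m+7)) = (b : Fin (m+7)) ↔ a = b := by
  rw [Fin.ext_iff]
  simp [Fin.val_natCast, Nat.mod_eq_of_lt ha, Nat.mod_eq_of_lt hb]

lemma shift_eq_shift {i : Fin (m+7)} {a b : ℕ} (ha : a < m+7) (hb : b < m+7) :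
    i + (a:ℕ) = i + (b:ℕ) ↔ a = b := by
  rw [add_right_inj, natCastFin_inj ha hb]

lemma shift_ne {i : Fin (m+7)} {a b : ℕ} (ha : a < m+7) (hb : b < m+7) (hab : a ≠ b) :
    i + (a:ℕ) ≠ i + (b:ℕ) := by
  rw [Ne, shift_eq_shift ha hb]; exact hab

/-! ### Wheel adjacency and distance -/

lemma cycAdj_iff {u v : Fin (m+7)} :
    (SimpleGraph.cycleGraph (m+7)).Adj u v ↔ v = u + 1 ∨ u = v + 1 := by
  rw [show (SimpleGraph.cycleGraph (m+7)).Adj u v ↔ u - v = 1 ∨ v - u = 1 from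
    SimpleGraph.cycleGraph_adj (n := m+5)]
  constructor
  · rintro (h | h)
    · exact Or.inr (by linear_combination h)
    · exact Or.inl (by linear_combination h)
  · rintro (h | h)
    · exact Or.inr (by linear_combination h)
    · exact Or.inl (by linear_combination h)

lemma wheel_adj_some_none (a : Fin (m+7)) : (wheel (m+7)).Adj (some a) none := by
  rw [wheel, joinK1, SimpleGraph.fromRel_adj]
  exact ⟨by simp, Or.inr (Or.inl rfl)⟩

lemma wheel_adj_none_some (a : Fin (m+7)) : (wheel (m+7)).Adj none (some a) :=
  (wheel_adj_some_none a).symm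

lemma wheel_adj_some_some {a b : Fin (m+7)} :
    (wheel (m+7)).Adj (some a) (some b) ↔ (SimpleGraph.cycleGraph (m+7)).Adj a b := by
  rw [wheel, joinK1, SimpleGraph.fromRel_adj]
  constructor
  · rintro ⟨hne, (h | ⟨w, w', hw, hw', hadj⟩) | (h | ⟨w, w', hw, hw', hadj⟩)⟩
    · exact absurd h (by simp)
    · rw [Option.some.injEq] at hw hw'; subst hw; subst hw'; exact hadj
    · exact absurd h (by simp)
    · rw [Option.some.injEq] at hw hw'; subst hw; subst hw'; exact hadj.symm
  · intro h
    exact ⟨by simpa using h.ne, Or.inl (Or.inr ⟨a, b, rfl, rfl, h⟩)⟩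

lemma wheel_dist_self (u : Option (Fin (m+7))) : (wheel (m+7)).dist u u = 0 :=
  SimpleGraph.dist_self

lemma wheel_dist_adj {u v : Option (Fin (m+7))} (h : (wheel (m+7)).Adj u v) :
    (wheel (m+7)).dist u v = 1 :=
  SimpleGraph.dist_eq_one_iff_adj.mpr h

lemma wheel_reachable (u v : Option (Fin (m+7))) : (wheel (m+7)).Reachable u v := by
  have key : ∀ w : Option (Fin (m+7)), (wheel (m+7)).Reachable none w := by
    intro w
    match w with
    | none => exact SimpleGraph.Reachable.refl _
    | some a => exact (wheel_adj_none_some a).reachable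
  exact ((key u).symm).trans (key v)

lemma wheel_dist_two {u v : Option (Fin (m+7))} (hne : u ≠ v) (hadj : ¬ (wheel (m+7)).Adj u v) :
    (wheel (m+7)).dist u v = 2 := by
  obtain ⟨a, rfl⟩ : ∃ a, u = some a := by
    match u with
    | none =>
      exfalso; apply hadj
      match v with
      | none => exact absurd rfl hne
      | some b => exact wheel_adj_none_some b
    | some a => exact ⟨a, rfl⟩
  obtain ⟨b, rfl⟩ : ∃ b, v = some b := by
    match v with
    | none => exact absurd (wheel_adj_some_none a) hadj
    | some b => exact ⟨b, rfl⟩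
  have h2 : (wheel (m+7)).dist (some a) (some b) ≤ 2 := by
    refine le_trans (SimpleGraph.dist_le
      (.cons (wheel_adj_some_none a) (.cons (wheel_adj_none_some b) .nil))) ?_
    simp
  have h0 : (wheel (m+7)).dist (some a) (some b) ≠ 0 := by
    intro h
    rcases SimpleGraph.dist_eq_zero_iff_eq_or_not_reachable.mp h with h' | h'
    · exact hne h'
    · exact h' (wheel_reachable _ _)
  have h1 : (wheel (m+7)).dist (some a) (some b) ≠ 1 := by
    intro h
    exact hadj (SimpleGraph.dist_eq_one_iff_adj.mp h)
  omega

/-! ### Bridge to combinatorics -/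

def cycA (m : ℕ) (u v : Fin (m+7)) : Prop := (SimpleGraph.cycleGraph (m+7)).Adj u v

def CombRes (m : ℕ) (P : Finset (Fin (m+7))) : Prop :=
  ∀ u v : Fin (m+7), u ≠ v → ¬ cycA m u v →
    ∃ x ∈ P, ¬((x = u ↔ x = v) ∧ (cycA m u x ↔ cycA m v x))

lemma wheel_dist_pos {u v : Option (Fin (m+7))} (h : u ≠ v) :
    (wheel (m+7)).dist u v ≠ 0 := by
  intro h0
  rcases SimpleGraph.dist_eq_zero_iff_eq_or_not_reachable.mp h0 with h' | h'
  · exact h h'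
  · exact h' (wheel_reachable _ _)

lemma combRes_of_NL {X : Finset (Option (Fin (m+7)))} (hX : IsNLResolving (wheel (m+7)) X) :
    CombRes m (Finset.univ.filter (fun w => some w ∈ X)) := by
  intro u v huv hadj
  obtain ⟨x, hxX, hx⟩ := hX (some u) (some v) (by simpa using huv)
    (by rw [wheel_adj_some_some]; exact hadj)
  match x with
  | none =>
    exfalso
    rw [wheel_dist_adj (wheel_adj_some_none u), wheel_dist_adj (wheel_adj_some_none v)] at hx
    exact hx rfl
  | some w =>
    refine ⟨w, by simpa using hxX, ?_⟩
    rintro ⟨h1, h2⟩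
    apply hx
    by_cases hwu : w = u
    · exact absurd (hwu.symm.trans (h1.mp hwu)) huv
    · have hwv : w ≠ v := fun h => hwu (h1.mpr h)
      by_cases hA : cycA m u w
      · rw [wheel_dist_adj (wheel_adj_some_some.mpr hA),
          wheel_dist_adj (wheel_adj_some_some.mpr (h2.mp hA))]
      · have hB : ¬ cycA m v w := fun h => hA (h2.mpr h)
        rw [wheel_dist_two (by simpa using (Ne.symm hwu)) (by rw [wheel_adj_some_some]; exact hA),
          wheel_dist_two (by simpa using (Ne.symm hwv)) (by rw [wheel_adj_some_some]; exact hB)]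

lemma NL_of_combRes {P : Finset (Fin (m+7))} (hP : CombRes m P) :
    IsNLResolving (wheel (m+7)) (P.image some) := by
  intro u v huv hadj
  obtain ⟨a, rfl⟩ : ∃ a, u = some a := by
    match u with
    | none =>
      exfalso; apply hadj
      match v with
      | none => exact absurd rfl huv
      | some b => exact wheel_adj_none_some b
    | some a => exact ⟨a, rfl⟩
  obtain ⟨b, rfl⟩ : ∃ b, v = some b := by
    match v with
    | none => exact absurd (wheel_adj_some_none a) hadj
    | some b => exact ⟨b, rfl⟩
  have hab : a ≠ b := by simpa using huv
  obtain ⟨x, hxP, hx⟩ := hP a b hab (fun h => hadj (wheel_adj_some_some.mpr h))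
  refine ⟨some x, Finset.mem_image_of_mem _ hxP, ?_⟩
  by_cases hxa : x = a
  · subst hxa
    rw [wheel_dist_self]
    exact (wheel_dist_pos (by simpa using fun h => hab h.symm)).symm
  · by_cases hxb : x = b
    · subst hxb
      rw [wheel_dist_self (u := some x)]
      exact (wheel_dist_pos (by simpa using (Ne.symm hxa)))
    · have h1 : (x = a ↔ x = b) := by simp [hxa, hxb]
      have h2 : ¬(cycA m a x ↔ cycA m b x) := fun h => hx ⟨h1, h⟩
      by_cases hA : cycA m a x
      · have hB : ¬ cycA m b x := fun h => h2 ⟨fun _ => h, fun _ => hA⟩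
        rw [wheel_dist_adj (wheel_adj_some_some.mpr hA),
          wheel_dist_two (by simpa using (Ne.symm hxb)) (by rw [wheel_adj_some_some]; exact hB)]
        omega
      · have hB : cycA m b x := by
          by_contra hB
          exact h2 ⟨fun h => absurd h hA, fun h => absurd h hB⟩
        rw [wheel_dist_adj (wheel_adj_some_some.mpr hB),
          wheel_dist_two (by simpa using (Ne.symm hxa)) (by rw [wheel_adj_some_some]; exact hA)]
        omega

/-! ### Combinatorial lower bound -/

lemma fin_cast_ne_zero {k : ℕ} (h1 : 0 < k) (h2 : k < m+7) : ((k : ℕ) : Fin (m+7)) ≠ 0 := by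
  have : ((k : ℕ) : Fin (m+7)) = ((0 : ℕ) : Fin (m+7)) ↔ k = 0 :=
    natCastFin_inj h2 (by omega)
  simp only [Nat.cast_zero] at this
  exact fun h => (by omega : k ≠ 0) (this.mp h)

lemma shift_neq (i : Fin (m+7)) {k : ℕ} (h1 : 0 < k) (h2 : k < m+7) : i + (k:ℕ) ≠ i := by
  intro h
  apply fin_cast_ne_zero h1 h2 (m := m)
  linear_combination h

lemma cycA_iff {u v : Fin (m+7)} : cycA m u v ↔ v = u + 1 ∨ u = v + 1 := cycAdj_iff

def run3 (P : Finset (Fin (m+7))) (s : Fin (m+7)) : Prop :=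
  s ∉ P ∧ s + 1 ∉ P ∧ s + 2 ∉ P

lemma run3_close {P : Finset (Fin (m+7))} (hP : CombRes m P) {s t : Fin (m+7)}
    (hs : run3 P s) (ht : run3 P t) : t = s ∨ t = s + 1 ∨ t + 1 = s := by
  by_contra hcon
  push_neg at hcon
  obtain ⟨hts, hts1, ht1s⟩ := hcon
  obtain ⟨x, hxP, hx⟩ := hP (s+1) (t+1)
    (by intro h; exact hts (by linear_combination - h))
    (by
      intro h
      rcases cycA_iff.mp h with h' | h'
      · exact hts1 (by linear_combination h')
      · exact ht1s (by linear_combination - h'))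
  apply hx
  constructor
  · exact iff_of_false (fun h => hs.2.1 (h ▸ hxP)) (fun h => ht.2.1 (h ▸ hxP))
  · refine iff_of_false ?_ ?_
    · intro h
      rcases cycA_iff.mp h with h' | h'
      · exact hs.2.2 ((show x = s + 2 by linear_combination h') ▸ hxP)
      · exact hs.1 ((show x = s by linear_combination - h') ▸ hxP)
    · intro h
      rcases cycA_iff.mp h with h' | h'
      · exact ht.2.2 ((show x = t + 2 by linear_combination h') ▸ hxP)
      · exact ht.1 ((show x = t by linear_combination - h') ▸ hxP)

lemma patternB {P : Finset (Fin (m+7))} (hP : CombRes m P) (a : Fin (m+7))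
    (h2 : a + 2 ∈ P) (h0 : a ∉ P) (h1 : a + 1 ∉ P) (h3 : a + 3 ∉ P) (h4 : a + 4 ∉ P) :
    False := by
  obtain ⟨x, hxP, hx⟩ := hP (a+1) (a+3)
    (by
      intro h
      exact shift_neq a (k := 2) (by norm_num) (by omega)
        (by push_cast; linear_combination - h))
    (by
      intro h
      rcases cycA_iff.mp h with h' | h'
      · exact shift_neq a (k := 1) (by norm_num) (by omega)
          (by push_cast; linear_combination h')
      · exact shift_neq a (k := 3) (by norm_num) (by omega)
          (by push_cast; linear_combination - h'))
  apply hx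
  constructor
  · exact iff_of_false (fun h => h1 (h ▸ hxP)) (fun h => h3 (h ▸ hxP))
  · by_cases hx2 : x = a + 2
    · subst hx2
      exact iff_of_true (cycA_iff.mpr (Or.inl (by ring))) (cycA_iff.mpr (Or.inr (by ring)))
    · refine iff_of_false ?_ ?_
      · intro h
        rcases cycA_iff.mp h with h' | h'
        · exact hx2 (by linear_combination h')
        · exact h0 ((show x = a by linear_combination - h') ▸ hxP)
      · intro h
        rcases cycA_iff.mp h with h' | h'
        · exact h4 ((show x = a + 4 by linear_combination h') ▸ hxP)
        · exact hx2 (by linear_combination - h')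

def Wnd (i : Fin (m+7)) : Finset (Fin (m+7)) := {i, i+1, i+2, i+3, i+4}

lemma window_ge_one {P : Finset (Fin (m+7))} (hP : CombRes m P) (i : Fin (m+7)) :
    1 ≤ (P ∩ Wnd i).card := by
  by_contra h
  push_neg at h
  interval_cases h' : (P ∩ Wnd i).card
  rw [Finset.card_eq_zero, Finset.eq_empty_iff_forall_notMem] at h'
  have hmem : ∀ x ∈ Wnd i, x ∉ P := fun x hw hp => h' x (Finset.mem_inter.mpr ⟨hp, hw⟩)
  have n0 : i ∉ P := hmem i (by simp [Wnd])
  have n1 : i + 1 ∉ P := hmem _ (by simp [Wnd])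
  have n2 : i + 2 ∉ P := hmem _ (by simp [Wnd])
  have n3 : i + 3 ∉ P := hmem _ (by simp [Wnd])
  have n4 : i + 4 ∉ P := hmem _ (by simp [Wnd])
  have hr1 : run3 P i := ⟨n0, n1, n2⟩
  have hr2 : run3 P (i + 2) := ⟨n2, by rw [show i+2+1 = i+3 by ring]; exact n3,
    by rw [show i+2+2 = i+4 by ring]; exact n4⟩
  rcases run3_close hP hr1 hr2 with h' | h' | h'
  · exact shift_neq i (k := 2) (by norm_num) (by omega) (by push_cast; linear_combination h')
  · exact shift_neq i (k := 1) (by norm_num) (by omega) (by push_cast; linear_combination h')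
  · exact shift_neq i (k := 3) (by norm_num) (by omega) (by push_cast; linear_combination h')

lemma window_small_run {P : Finset (Fin (m+7))} (hP : CombRes m P) (i : Fin (m+7))
    (h : (P ∩ Wnd i).card ≤ 1) :
    run3 P i ∨ run3 P (i+1) ∨ run3 P (i+2) := by
  have uniq := Finset.card_le_one.mp h
  have key : ∀ c d : ℕ, c < 5 → d < 5 → c ≠ d → i + (c:ℕ) ∈ P → i + (d:ℕ) ∈ P → False := by
    intro c d hc hd hcd hcP hdP
    have hcW : i + (c:ℕ) ∈ Wnd i := by
      simp only [Wnd, Finset.mem_insert, Finset.mem_singleton]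
      interval_cases c
      · left; push_cast; ring
      · right; left; push_cast; ring
      · right; right; left; push_cast; ring
      · right; right; right; left; push_cast; ring
      · right; right; right; right; push_cast; ring
    have hdW : i + (d:ℕ) ∈ Wnd i := by
      simp only [Wnd, Finset.mem_insert, Finset.mem_singleton]
      interval_cases d
      · left; push_cast; ring
      · right; left; push_cast; ring
      · right; right; left; push_cast; ring
      · right; right; right; left; push_cast; ring
      · right; right; right; right; push_cast; ring
    have := uniq _ (Finset.mem_inter.mpr ⟨hcP, hcW⟩) _ (Finset.mem_inter.mpr ⟨hdP, hdW⟩)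
    rw [shift_eq_shift (by omega) (by omega)] at this
    exact hcd this
  by_cases h2 : i + 2 ∈ P
  · exfalso
    refine patternB hP i h2 ?_ ?_ ?_ ?_
    · intro hc; exact key 0 2 (by norm_num) (by norm_num) (by norm_num) (by push_cast; simpa) (by push_cast; simpa)
    · intro hc; exact key 1 2 (by norm_num) (by norm_num) (by norm_num) (by push_cast; simpa) (by push_cast; simpa)
    · intro hc; exact key 3 2 (by norm_num) (by norm_num) (by norm_num) (by push_cast; simpa) (by push_cast; simpa)
    · intro hc; exact key 4 2 (by norm_num) (by norm_num) (by norm_num) (by push_cast; simpa) (by push_cast; simpa)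
  · by_cases h1 : i + 1 ∈ P
    · right; right
      refine ⟨h2, ?_, ?_⟩
      · rw [show i+2+1 = i+3 by ring]
        intro hc; exact key 3 1 (by norm_num) (by norm_num) (by norm_num) (by push_cast; simpa) (by push_cast; simpa)
      · rw [show i+2+2 = i+4 by ring]
        intro hc; exact key 4 1 (by norm_num) (by norm_num) (by norm_num) (by push_cast; simpa) (by push_cast; simpa)
    · by_cases h3 : i + 3 ∈ P
      · left
        refine ⟨?_, h1, h2⟩
        intro hc; exact key 0 3 (by norm_num) (by norm_num) (by norm_num) (by push_cast; simpa) (by push_cast; simpa)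
      · right; left
        exact ⟨h1, by rw [show i+1+1 = i+2 by ring]; exact h2,
          by rw [show i+1+2 = i+3 by ring]; exact h3⟩

lemma runs_caseA {P : Finset (Fin (m+7))} (hP : CombRes m P) {a s : Fin (m+7)}
    (ha : run3 P a) (ha1 : run3 P (a+1)) (hs : run3 P s) : s = a ∨ s = a + 1 := by
  rcases run3_close hP ha hs with h | h | h
  · exact Or.inl h
  · exact Or.inr h
  · exfalso
    rcases run3_close hP ha1 hs with h' | h' | h'
    · -- s = a + 1 and s + 1 = a
      exact shift_neq a (k := 2) (by norm_num) (by omega)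
        (by push_cast; linear_combination h - h')
    · -- s = a + 2 and s + 1 = a
      exact shift_neq a (k := 3) (by norm_num) (by omega)
        (by push_cast; linear_combination h - h')
    · -- s + 1 = a + 1 and s + 1 = a
      exact shift_neq a (k := 1) (by norm_num) (by omega)
        (by push_cast; linear_combination h - h')

lemma runs_caseB {P : Finset (Fin (m+7))} (hP : CombRes m P) {a s : Fin (m+7)}
    (ha : run3 P a) (hna1 : ¬ run3 P (a+1)) (hs : run3 P s) : s = a ∨ s + 1 = a := by
  rcases run3_close hP ha hs with h | h | h
  · exact Or.inl h
  · exact absurd (h ▸ hs) hna1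
  · exact Or.inr h

lemma card4 {α : Type*} [DecidableEq α] (w x y z : α) : ({w, x, y, z} : Finset α).card ≤ 4 := by
  refine le_trans (Finset.card_insert_le _ _) ?_
  have h2 := Finset.card_insert_le x ({y, z} : Finset α)
  have h3 := Finset.card_insert_le y ({z} : Finset α)
  simp only [Finset.card_singleton] at h3
  omega

lemma exists_T {P : Finset (Fin (m+7))} (hP : CombRes m P) :
    ∃ T : Finset (Fin (m+7)), T.card ≤ 4 ∧ ∀ i, i ∉ T → 2 ≤ (P ∩ Wnd i).card := by
  by_cases hR : ∃ a, run3 P a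
  · obtain ⟨a, ha⟩ := hR
    by_cases hR1 : run3 P (a+1)
    · refine ⟨{a-2, a-1, a, a+1}, card4 _ _ _ _, ?_⟩
      intro i hi
      by_contra hlt
      push_neg at hlt
      have hle : (P ∩ Wnd i).card ≤ 1 := by omega
      apply hi
      simp only [Finset.mem_insert, Finset.mem_singleton]
      rcases window_small_run hP i hle with h | h | h <;>
        rcases runs_caseA hP ha hR1 h with h' | h'
      · right; right; left; exact h'
      · right; right; right; exact h'
      · right; left; linear_combination h'
      · right; right; left; linear_combination h'
      · left; linear_combination h'
      · right; left; linear_combination h'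
    · refine ⟨{a-3, a-2, a-1, a}, card4 _ _ _ _, ?_⟩
      intro i hi
      by_contra hlt
      push_neg at hlt
      have hle : (P ∩ Wnd i).card ≤ 1 := by omega
      apply hi
      simp only [Finset.mem_insert, Finset.mem_singleton]
      rcases window_small_run hP i hle with h | h | h <;>
        rcases runs_caseB hP ha hR1 h with h' | h'
      · right; right; right; exact h'
      · right; right; left; linear_combination h'
      · right; right; left; linear_combination h'
      · right; left; linear_combination h'
      · right; left; linear_combination h'
      · left; linear_combination h'
  · refine ⟨∅, by simp, ?_⟩
    intro i _
    by_contra hlt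
    push_neg at hlt
    have hle : (P ∩ Wnd i).card ≤ 1 := by omega
    rcases window_small_run hP i hle with h | h | h
    · exact hR ⟨i, h⟩
    · exact hR ⟨i+1, h⟩
    · exact hR ⟨i+2, h⟩

def Wnd' (x : Fin (m+7)) : Finset (Fin (m+7)) := {x, x-1, x-2, x-3, x-4}

lemma mem_Wnd_iff {x i : Fin (m+7)} : x ∈ Wnd i ↔ i ∈ Wnd' x := by
  simp only [Wnd, Wnd', Finset.mem_insert, Finset.mem_singleton]
  constructor
  · rintro (h | h | h | h | h)
    · left; linear_combination - h
    · right; left; linear_combination - h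
    · right; right; left; linear_combination - h
    · right; right; right; left; linear_combination - h
    · right; right; right; right; linear_combination - h
  · rintro (h | h | h | h | h)
    · left; linear_combination - h
    · right; left; linear_combination - h
    · right; right; left; linear_combination - h
    · right; right; right; left; linear_combination - h
    · right; right; right; right; linear_combination - h

lemma card_Wnd' (x : Fin (m+7)) : (Wnd' x).card = 5 := by
  have key : ∀ c d : ℕ, c < m + 7 → d < m + 7 → c ≠ d → x - ((c:ℕ) : Fin (m+7)) ≠ x - ((d:ℕ) : Fin (m+7)) := by
    intro c d hc hd hcd h
    apply hcd
    rw [← shift_eq_shift (i := x - ((c:ℕ) : Fin (m+7)) - ((d:ℕ) : Fin (m+7))) hc hd]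
    linear_combination - h
  rw [Wnd']
  rw [Finset.card_insert_of_notMem, Finset.card_insert_of_notMem,
    Finset.card_insert_of_notMem, Finset.card_insert_of_notMem, Finset.card_singleton]
  · simp only [Finset.mem_singleton]
    have := key 3 4 (by omega) (by omega) (by norm_num)
    intro h; apply this; push_cast; linear_combination h
  · simp only [Finset.mem_insert, Finset.mem_singleton]
    push_neg
    constructor
    · have := key 2 3 (by omega) (by omega) (by norm_num)
      intro h; apply this; push_cast; linear_combination h
    · have := key 2 4 (by omega) (by omega) (by norm_num)
      intro h; apply this; push_cast; linear_combination h
  · simp only [Finset.mem_insert, Finset.mem_singleton]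
    push_neg
    refine ⟨?_, ?_, ?_⟩
    · have := key 1 2 (by omega) (by omega) (by norm_num)
      intro h; apply this; push_cast; linear_combination h
    · have := key 1 3 (by omega) (by omega) (by norm_num)
      intro h; apply this; push_cast; linear_combination h
    · have := key 1 4 (by omega) (by omega) (by norm_num)
      intro h; apply this; push_cast; linear_combination h
  · simp only [Finset.mem_insert, Finset.mem_singleton]
    push_neg
    refine ⟨?_, ?_, ?_, ?_⟩
    · have := key 0 1 (by omega) (by omega) (by norm_num)
      intro h; apply this; push_cast; linear_combination h
    · have := key 0 2 (by omega) (by omega) (by norm_num)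
      intro h; apply this; push_cast; linear_combination h
    · have := key 0 3 (by omega) (by omega) (by norm_num)
      intro h; apply this; push_cast; linear_combination h
    · have := key 0 4 (by omega) (by omega) (by norm_num)
      intro h; apply this; push_cast; linear_combination h

lemma window_sum (P : Finset (Fin (m+7))) :
    ∑ i : Fin (m+7), (P ∩ Wnd i).card = 5 * P.card := by
  have h1 : ∀ i : Fin (m+7), (P ∩ Wnd i).card = ∑ x ∈ P, if x ∈ Wnd i then 1 else 0 := by
    intro i
    rw [← Finset.filter_mem_eq_inter, Finset.card_filter]
  simp only [h1]
  rw [Finset.sum_comm]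
  have h2 : ∀ x : Fin (m+7), (∑ i : Fin (m+7), if x ∈ Wnd i then 1 else 0) = 5 := by
    intro x
    simp only [mem_Wnd_iff]
    rw [Finset.sum_ite_mem, Finset.univ_inter, Finset.sum_const, card_Wnd', smul_eq_mul, mul_one]
  rw [Finset.sum_congr rfl (fun x _ => h2 x), Finset.sum_const, smul_eq_mul, mul_comm]

theorem comb_lower {P : Finset (Fin (m+7))} (hP : CombRes m P) :
    2 * (m + 7) ≤ 5 * P.card + 4 := by
  obtain ⟨T, hT4, hTw⟩ := exists_T hP
  have hpt : ∀ i : Fin (m+7), 2 ≤ (P ∩ Wnd i).card + (if i ∈ T then 1 else 0) := by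
    intro i
    by_cases h : i ∈ T
    · simp only [h, if_true]
      have := window_ge_one hP i
      omega
    · simp only [h, if_false]
      have := hTw i h
      omega
  have hsum : 2 * (m + 7) ≤ ∑ i : Fin (m+7), ((P ∩ Wnd i).card + (if i ∈ T then 1 else 0)) := by
    calc 2 * (m+7) = ∑ _i : Fin (m+7), 2 := by
          rw [Finset.sum_const, Finset.card_univ, Fintype.card_fin, smul_eq_mul, mul_comm]
      _ ≤ _ := Finset.sum_le_sum (fun i _ => hpt i)
  rw [Finset.sum_add_distrib, window_sum] at hsum
  have hTsum : (∑ i : Fin (m+7), if i ∈ T then 1 else 0) = T.card := by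
    rw [Finset.sum_ite_mem, Finset.univ_inter, Finset.sum_const, smul_eq_mul, mul_one]
  rw [hTsum] at hsum
  omega

/-! ### Values of successor and predecessor -/

lemma val_add_one' (x : Fin (m+7)) :
    ((x+1).val = x.val + 1 ∧ x.val + 1 < m+7) ∨ ((x+1).val = 0 ∧ x.val = m+6) := by
  rcases Nat.lt_or_ge (x.val + 1) (m+7) with h | h
  · left
    refine ⟨?_, h⟩
    rw [Fin.val_add_one_of_lt]
    exact Fin.lt_last_iff_ne_last.mpr (by intro hx; rw [hx] at h; simp [Fin.last] at h)
  · right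
    have hx : x = Fin.last (m+6) := by
      apply Fin.ext; simp [Fin.last]; omega
    subst hx
    simp [Fin.last_add_one]

lemma val_sub_one' (x : Fin (m+7)) :
    ((x-1).val = x.val - 1 ∧ 0 < x.val) ∨ ((x-1).val = m+6 ∧ x.val = 0) := by
  rcases Nat.eq_zero_or_pos x.val with h | h
  · right
    have hx : x = 0 := by apply Fin.ext; simpa using h
    subst hx
    constructor
    · simp [Fin.coe_sub_one]
    · simp
  · left
    refine ⟨?_, h⟩
    rw [Fin.coe_sub_one, if_neg (by intro hx; rw [hx] at h; simp at h)]

/-! ### A sufficient criterion for `CombRes` -/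

lemma aux_d {P : Finset (Fin (m+7))}
    (hB : ∀ u : Fin (m+7), u + 1 ∈ P → u - 1 ∈ P ∨ u ∈ P ∨ u + 2 ∈ P ∨ u + 3 ∈ P)
    {u v : Fin (m+7)} (huv : u ≠ v)
    (hcon : ∀ x ∈ P, (x = u ↔ x = v) ∧ (cycA m u x ↔ cycA m v x))
    (hv : v = u + 2) (hx0 : u + 1 ∈ P) : False := by
  rcases hB u hx0 with h | h | h | h
  · -- u - 1 ∈ P
    have hadj : cycA m u (u-1) := cycA_iff.mpr (Or.inr (by ring))
    have := (hcon _ h).2.mp hadj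
    rcases cycA_iff.mp this with h' | h'
    · -- u - 1 = v + 1 = u + 3
      refine shift_neq (u - 1) (k := 4) (by norm_num) (by omega) ?_
      push_cast
      rw [hv] at h'
      linear_combination - h'
    · -- v = u - 1 + 1 = u
      exact huv (by linear_combination - h')
  · -- u ∈ P
    exact huv ((hcon u h).1.mp rfl)
  · -- u + 2 ∈ P, i.e. v ∈ P
    refine shift_neq u (k := 2) (by norm_num) (by omega) ?_
    push_cast
    linear_combination ((hcon (u+2) h).1.mpr hv.symm)
  · -- u + 3 ∈ P
    have hadj : cycA m v (u+3) := cycA_iff.mpr (Or.inl (by rw [hv]; ring))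
    have := (hcon _ h).2.mpr hadj
    rcases cycA_iff.mp this with h' | h'
    · exact shift_neq u (k := 2) (by norm_num) (by omega)
        (by push_cast; linear_combination h')
    · exact shift_neq u (k := 4) (by norm_num) (by omega)
        (by push_cast; linear_combination - h')

lemma aux_one {P : Finset (Fin (m+7))}
    (hB : ∀ u : Fin (m+7), u + 1 ∈ P → u - 1 ∈ P ∨ u ∈ P ∨ u + 2 ∈ P ∨ u + 3 ∈ P)
    {u v x0 : Fin (m+7)} (huv : u ≠ v) (hnadj : ¬ cycA m u v)
    (hcon : ∀ x ∈ P, (x = u ↔ x = v) ∧ (cycA m u x ↔ cycA m v x)) (hx0 : x0 ∈ P)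
    (hside : x0 = u - 1 ∨ x0 = u + 1) : False := by
  have hadj : cycA m u x0 := by
    rcases hside with h | h
    · exact cycA_iff.mpr (Or.inr (by rw [h]; ring))
    · exact cycA_iff.mpr (Or.inl h)
  have hadjv := (hcon _ hx0).2.mp hadj
  rcases cycA_iff.mp hadjv with h' | h'
  · -- x0 = v + 1
    rcases hside with h | h
    · -- u - 1 = v + 1 : u = v + 2
      have hu : u = v + 2 := by linear_combination h' - h
      have hcon' : ∀ x ∈ P, (x = v ↔ x = u) ∧ (cycA m v x ↔ cycA m u x) :=
        fun x hx => ⟨(hcon x hx).1.symm, (hcon x hx).2.symm⟩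
      exact aux_d hB (Ne.symm huv) hcon' hu (by rw [← h']; exact hx0)
    · -- u + 1 = v + 1 : u = v
      exact huv (by rw [h] at h'; linear_combination h')
  · -- v = x0 + 1
    rcases hside with h | h
    · -- v = u - 1 + 1 = u
      exact huv (by rw [h] at h'; linear_combination - h')
    · -- v = u + 2
      have hv : v = u + 2 := by rw [h] at h'; linear_combination h'
      exact aux_d hB huv hcon hv (by rw [← h]; exact hx0)

lemma combRes_of (P : Finset (Fin (m+7)))
    (hA : ∀ u v : Fin (m+7), u - 1 ∉ P → u ∉ P → u + 1 ∉ P → v - 1 ∉ P → v ∉ P → v + 1 ∉ P →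
      u = v ∨ v = u + 1 ∨ u = v + 1)
    (hB : ∀ u : Fin (m+7), u + 1 ∈ P → u - 1 ∈ P ∨ u ∈ P ∨ u + 2 ∈ P ∨ u + 3 ∈ P) :
    CombRes m P := by
  intro u v huv hnadj
  by_contra hcon
  push_neg at hcon
  have hcon' : ∀ x ∈ P, (x = u ↔ x = v) ∧ (cycA m u x ↔ cycA m v x) := by
    intro x hx
    have := hcon x hx
    tauto
  have hconS : ∀ x ∈ P, (x = v ↔ x = u) ∧ (cycA m v x ↔ cycA m u x) :=
    fun x hx => ⟨(hcon' x hx).1.symm, (hcon' x hx).2.symm⟩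
  by_cases h1 : u - 1 ∈ P ∨ u ∈ P ∨ u + 1 ∈ P
  · rcases h1 with h | h | h
    · exact aux_one hB huv hnadj hcon' h (Or.inl rfl)
    · exact huv ((hcon' u h).1.mp rfl)
    · exact aux_one hB huv hnadj hcon' h (Or.inr rfl)
  · by_cases h2 : v - 1 ∈ P ∨ v ∈ P ∨ v + 1 ∈ P
    · have hnadj' : ¬ cycA m v u := fun h => hnadj h.symm
      rcases h2 with h | h | h
      · exact aux_one hB (Ne.symm huv) hnadj' hconS h (Or.inl rfl)
      · exact huv ((hconS v h).1.mp rfl).symm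
      · exact aux_one hB (Ne.symm huv) hnadj' hconS h (Or.inr rfl)
    · push_neg at h1 h2
      rcases hA u v h1.1 h1.2.1 h1.2.2 h2.1 h2.2.1 h2.2.2 with h | h | h
      · exact huv h
      · exact hnadj (cycA_iff.mpr (Or.inl h))
      · exact hnadj (cycA_iff.mpr (Or.inr h))

/-! ### The explicit construction -/

def Pc (m : ℕ) : Finset (Fin (m+7)) :=
  Finset.univ.filter (fun x =>
    (x.val < 5*((m+7)/5) ∧ (x.val % 5 = 0 ∨ x.val % 5 = 2)) ∨
    (3 ≤ (m+7) % 5 ∧ x.val = m+5))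

lemma mem_Pc {x : Fin (m+7)} :
    x ∈ Pc m ↔ ((x.val < 5*((m+7)/5) ∧ (x.val % 5 = 0 ∨ x.val % 5 = 2)) ∨
      (3 ≤ (m+7) % 5 ∧ x.val = m+5)) := by
  simp [Pc]

lemma unseen_val {u : Fin (m+7)} (h1 : u - 1 ∉ Pc m) (h2 : u ∉ Pc m) (h3 : u + 1 ∉ Pc m) :
    u.val = 5*((m+7)/5) - 1 ∨ u.val = 5*((m+7)/5) := by
  rw [mem_Pc] at h1 h2 h3
  push_neg at h1 h2 h3
  have hult := u.is_lt
  rcases val_sub_one' u with ⟨e1, e2⟩ | ⟨e1, e2⟩ <;>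
    rcases val_add_one' u with ⟨f1, f2⟩ | ⟨f1, f2⟩ <;> omega

lemma Pc_A {u v : Fin (m+7)} (hu1 : u - 1 ∉ Pc m) (hu2 : u ∉ Pc m) (hu3 : u + 1 ∉ Pc m)
    (hv1 : v - 1 ∉ Pc m) (hv2 : v ∉ Pc m) (hv3 : v + 1 ∉ Pc m) :
    u = v ∨ v = u + 1 ∨ u = v + 1 := by
  have hcu := unseen_val hu1 hu2 hu3
  have hcv := unseen_val hv1 hv2 hv3
  have hult := u.is_lt
  have hvlt := v.is_lt
  have h51 : 1 ≤ (m+7)/5 := by omega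
  have h55 : 5*((m+7)/5) ≤ m + 7 := by omega
  rcases hcu with hu | hu <;> rcases hcv with hv | hv
  · exact Or.inl (Fin.ext (by omega))
  · refine Or.inr (Or.inl (Fin.ext ?_))
    rcases val_add_one' u with ⟨h1, h2⟩ | ⟨h1, h2⟩ <;> omega
  · refine Or.inr (Or.inr (Fin.ext ?_))
    rcases val_add_one' v with ⟨h1, h2⟩ | ⟨h1, h2⟩ <;> omega
  · exact Or.inl (Fin.ext (by omega))

lemma Pc_B (u : Fin (m+7)) (h : u + 1 ∈ Pc m) :
    u - 1 ∈ Pc m ∨ u ∈ Pc m ∨ u + 2 ∈ Pc m ∨ u + 3 ∈ Pc m := by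
  by_contra hcon
  push_neg at hcon
  obtain ⟨n1, n0, n2, n3⟩ := hcon
  have e0 : u = (u+1) - 1 := by ring
  have e1 : u - 1 = ((u+1) - 1) - 1 := by ring
  have e2 : u + 2 = (u+1) + 1 := by ring
  have e3 : u + 3 = ((u+1) + 1) + 1 := by ring
  rw [e0, mem_Pc] at n0
  rw [e1, mem_Pc] at n1
  rw [e2, mem_Pc] at n2
  rw [e3, mem_Pc] at n3
  rw [mem_Pc] at h
  push_neg at n0 n1 n2 n3
  have hlt := (u+1).is_lt
  rcases val_sub_one' (u+1) with ⟨a1, a2⟩ | ⟨a1, a2⟩ <;>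
    rcases val_sub_one' ((u+1) - 1) with ⟨b1, b2⟩ | ⟨b1, b2⟩ <;>
      rcases val_add_one' (u+1) with ⟨c1, c2⟩ | ⟨c1, c2⟩ <;>
        rcases val_add_one' ((u+1) + 1) with ⟨d1, d2⟩ | ⟨d1, d2⟩ <;> omega

def fF (m w : ℕ) : ℕ := if w < 5*((m+7)/5) then 2*(w/5) + (w % 5)/2 else 2*((m+7)/5)

def gG (m k : ℕ) : ℕ := if k < 2*((m+7)/5) then 5*(k/2) + 2*(k%2) else m+5

lemma gG_lt (m k : ℕ) : gG m k < m+7 := by unfold gG; split <;> omega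

lemma fF_base0 {d : ℕ} (hd : 5*d < 5*((m+7)/5)) : fF m (5*d) = 2*d := by
  unfold fF
  rw [if_pos hd, show (5*d)/5 = d from by omega, show (5*d)%5 = 0 from by omega]
  norm_num

lemma fF_base2 {d : ℕ} (hd : 5*d+2 < 5*((m+7)/5)) : fF m (5*d+2) = 2*d+1 := by
  unfold fF
  rw [if_pos hd, show (5*d+2)/5 = d from by omega, show (5*d+2)%5 = 2 from by omega]

lemma fF_hi {w : ℕ} (h : ¬ w < 5*((m+7)/5)) : fF m w = 2*((m+7)/5) := by
  unfold fF; rw [if_neg h]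

lemma gG_lo0 {d : ℕ} (h : 2*d < 2*((m+7)/5)) : gG m (2*d) = 5*d := by
  unfold gG
  rw [if_pos h, show (2*d)/2 = d from by omega, show (2*d)%2 = 0 from by omega]
  norm_num

lemma gG_lo1 {d : ℕ} (h : 2*d+1 < 2*((m+7)/5)) : gG m (2*d+1) = 5*d+2 := by
  unfold gG
  rw [if_pos h, show (2*d+1)/2 = d from by omega, show (2*d+1)%2 = 1 from by omega]

lemma gG_hi {k : ℕ} (h : ¬ k < 2*((m+7)/5)) : gG m k = m+5 := by
  unfold gG; rw [if_neg h]

lemma fF_mem {a : Fin (m+7)} (ha : a ∈ Pc m) : fF m a.val ∈ Finset.range (2*(m+7)/5) := by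
  rw [mem_Pc] at ha
  rw [Finset.mem_range]
  rcases ha with ⟨hlt, ht⟩ | ⟨hr, hv⟩
  · obtain ⟨d, hd⟩ : ∃ d, (a:ℕ) = 5*d + (a:ℕ) % 5 := ⟨a.val/5, by omega⟩
    rcases ht with h | h <;> rw [h] at hd
    · rw [show (a:ℕ) = 5*d from by omega, fF_base0 (by omega)]
      omega
    · rw [show (a:ℕ) = 5*d+2 from by omega, fF_base2 (by omega)]
      omega
  · rw [fF_hi (by omega)]
    omega

lemma gG_mem {k : ℕ} (hk : k ∈ Finset.range (2*(m+7)/5)) :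
    (⟨gG m k, gG_lt m k⟩ : Fin (m+7)) ∈ Pc m := by
  rw [Finset.mem_range] at hk
  rw [mem_Pc]
  simp only
  by_cases h : k < 2*((m+7)/5)
  · obtain ⟨d, t, ht, rfl⟩ : ∃ d t, t < 2 ∧ k = 2*d + t := ⟨k/2, k%2, by omega, by omega⟩
    interval_cases t
    · rw [show 2*d+0 = 2*d from rfl] at h ⊢
      rw [gG_lo0 h]
      left
      constructor
      · omega
      · left; omega
    · rw [gG_lo1 h]
      left
      constructor
      · omega
      · right; omega
  · rw [gG_hi h]
    right
    constructor
    · omega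
    · rfl

lemma gG_fF {a : Fin (m+7)} (ha : a ∈ Pc m) :
    (⟨gG m (fF m a.val), gG_lt m _⟩ : Fin (m+7)) = a := by
  rw [mem_Pc] at ha
  apply Fin.ext
  simp only
  rcases ha with ⟨hlt, ht⟩ | ⟨hr, hv⟩
  · obtain ⟨d, hd⟩ : ∃ d, (a:ℕ) = 5*d + (a:ℕ) % 5 := ⟨a.val/5, by omega⟩
    rcases ht with h | h <;> rw [h] at hd
    · rw [show (a:ℕ) = 5*d from by omega, fF_base0 (by omega), gG_lo0 (by omega)]
    · rw [show (a:ℕ) = 5*d+2 from by omega, fF_base2 (by omega), gG_lo1 (by omega)]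
  · rw [hv, fF_hi (by omega), gG_hi (by omega)]

lemma fF_gG {k : ℕ} (hk : k ∈ Finset.range (2*(m+7)/5)) :
    fF m ((⟨gG m k, gG_lt m k⟩ : Fin (m+7)) : ℕ) = k := by
  rw [Finset.mem_range] at hk
  simp only
  by_cases h : k < 2*((m+7)/5)
  · obtain ⟨d, t, ht, rfl⟩ : ∃ d t, t < 2 ∧ k = 2*d + t := ⟨k/2, k%2, by omega, by omega⟩
    interval_cases t
    · rw [show 2*d+0 = 2*d from rfl] at h ⊢
      rw [gG_lo0 h, fF_base0 (by omega)]
    · rw [gG_lo1 h, fF_base2 (by omega)]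
  · rw [gG_hi h, fF_hi (by omega)]
    omega

lemma card_Pc : (Pc m).card = 2*(m+7)/5 := by
  rw [show (2*(m+7)/5) = (Finset.range (2*(m+7)/5)).card from (Finset.card_range _).symm]
  exact Finset.card_bij' (fun a _ => fF m a.val)
    (fun k hk => (⟨gG m k, gG_lt m k⟩ : Fin (m+7)))
    (fun a ha => fF_mem ha) (fun k hk => gG_mem hk)
    (fun a ha => gG_fF ha) (fun k hk => fF_gG hk)

lemma main (m : ℕ) : nldim (wheel (m+7)) = 2*(m+7)/5 := by
  have hub : (2*(m+7)/5) ∈ {n | ∃ X : Finset (Option (Fin (m+7))),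
      X.card = n ∧ IsNLResolving (wheel (m+7)) X} := by
    refine ⟨(Pc m).image some, ?_, ?_⟩
    · rw [Finset.card_image_of_injective _ (Option.some_injective _), card_Pc]
    · exact NL_of_combRes (combRes_of (Pc m)
        (fun u v h1 h2 h3 h4 h5 h6 => Pc_A h1 h2 h3 h4 h5 h6) Pc_B)
  apply le_antisymm
  · exact Nat.sInf_le hub
  · apply le_csInf ⟨_, hub⟩
    rintro k ⟨X, hcard, hres⟩
    have hcomb := combRes_of_NL hres
    have hlow := comb_lower hcomb
    have hPX : (Finset.univ.filter (fun w => some w ∈ X)).card ≤ X.card := by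
      have hsub : (Finset.univ.filter (fun w : Fin (m+7) => some w ∈ X)).image some ⊆ X := by
        intro x hx
        rw [Finset.mem_image] at hx
        obtain ⟨w, hw, rfl⟩ := hx
        exact (Finset.mem_filter.mp hw).2
      have := Finset.card_le_card hsub
      rwa [Finset.card_image_of_injective _ (Option.some_injective _)] at this
    omega

end NLW


/-- For every `n ≥ 7`, `dim_nl(W_{1,n}) = ⌊2n/5⌋`. -/
theorem stmt_8 (n : ℕ) (hn : 7 ≤ n) :
    nldim (wheel n) = 2 * n / 5 := by
  obtain ⟨m, rfl⟩ : ∃ m, n = m + 7 := ⟨n - 7, by omega⟩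
  exact NLW.main m
end

section
/- Let n ≥ 7 and let S be a nonlocal metric basis of the wheel W_{1,n} (so S contains no central vertex and S ⊆ V(C_n), |S| ≥ 2). Then every gap of S contains at most 4 vertices; that is, for every gap A_{i,j} of S, |A_{i,j}| ≤ 4. -/
open Fin.NatCast Fin.CommRing

lemma wheel_adj_some {n : ℕ} (u v : Fin n) :
    (wheel n).Adj (some u) (some v) ↔ (SimpleGraph.cycleGraph n).Adj u v := by
  simp only [wheel, joinK1, SimpleGraph.fromRel_adj]
  constructor
  · rintro ⟨hne, h | h⟩
    · rcases h with h | ⟨w, w', hw, hw', hadj⟩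
      · exact absurd h (by simp)
      · cases hw; cases hw'; exact hadj
    · rcases h with h | ⟨w, w', hw, hw', hadj⟩
      · exact absurd h (by simp)
      · cases hw; cases hw'; exact hadj.symm
  · intro h
    refine ⟨by simpa using h.ne, Or.inl (Or.inr ⟨u, v, rfl, rfl, h⟩)⟩

lemma wheel_adj_none {n : ℕ} (v : Fin n) : (wheel n).Adj none (some v) := by
  simp only [wheel, joinK1, SimpleGraph.fromRel_adj]
  refine ⟨by simp, Or.inl (Or.inl trivial)⟩

lemma wheel_dist_two {n : ℕ} {u v : Fin n} (hne : u ≠ v)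
    (hadj : ¬ (wheel n).Adj (some u) (some v)) :
    (wheel n).dist (some u) (some v) = 2 := by
  have h1 : (wheel n).Adj (some u) none := (wheel_adj_none u).symm
  have h2 : (wheel n).Adj none (some v) := wheel_adj_none v
  have hle : (wheel n).dist (some u) (some v) ≤ 2 := by
    have := SimpleGraph.dist_le
      (SimpleGraph.Walk.cons h1 (SimpleGraph.Walk.cons h2 SimpleGraph.Walk.nil))
    simpa using this
  have hr : (wheel n).Reachable (some u) (some v) :=
    ⟨SimpleGraph.Walk.cons h1 (SimpleGraph.Walk.cons h2 SimpleGraph.Walk.nil)⟩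
  have h0 : 0 < (wheel n).dist (some u) (some v) :=
    hr.pos_dist_of_ne (by simpa using hne)
  have hne1 : (wheel n).dist (some u) (some v) ≠ 1 := fun h =>
    hadj (SimpleGraph.dist_eq_one_iff_adj.mp h)
  omega

lemma shift_ne {n : ℕ} [NeZero n] (i : Fin n) {a b : ℕ} (ha : a < n) (hb : b < n)
    (hne : a ≠ b) : i + (a : Fin n) ≠ i + (b : Fin n) := by
  intro h
  have h2 : (a : Fin n) = (b : Fin n) := add_left_cancel h
  have := congrArg Fin.val h2
  rw [Fin.val_cast_of_lt ha, Fin.val_cast_of_lt hb] at this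
  exact hne this

lemma adj_shift {n : ℕ} [NeZero n] (hn : 7 ≤ n) (i s : Fin n) (m : ℕ)
    (hm : 1 ≤ m) (hm5 : m ≤ 5)
    (hadj : (SimpleGraph.cycleGraph n).Adj (i + (m : Fin n)) s) :
    s = i + ((m + 1 : ℕ) : Fin n) ∨ s = i + ((m - 1 : ℕ) : Fin n) := by
  rw [SimpleGraph.cycleGraph_adj'] at hadj
  have h1 : ((1 : ℕ) : Fin n).val = 1 := Fin.val_cast_of_lt (by omega)
  rcases hadj with h | h
  · -- (i + m) - s = 1, so s = i + (m - 1)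
    right
    have he : (i + (m : Fin n)) - s = ((1 : ℕ) : Fin n) := Fin.ext (by rw [h, h1])
    have : i + (m : Fin n) = ((1 : ℕ) : Fin n) + s := sub_eq_iff_eq_add.mp he
    have hs : s = i + (m : Fin n) - ((1 : ℕ) : Fin n) := by
      rw [this]; ring
    rw [hs]
    have : ((m - 1 : ℕ) : Fin n) = (m : Fin n) - ((1 : ℕ) : Fin n) := by
      push_cast [Nat.cast_sub hm]; ring
    rw [this]; ring
  · -- s - (i + m) = 1, so s = i + (m + 1)
    left
    have he : s - (i + (m : Fin n)) = ((1 : ℕ) : Fin n) := Fin.ext (by rw [h, h1])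
    have hs : s = ((1 : ℕ) : Fin n) + (i + (m : Fin n)) := sub_eq_iff_eq_add.mp he
    rw [hs]
    push_cast
    ring

/-- If `S ⊆ V(Cₙ)` is a nonlocal metric basis of the wheel
`W_{1,n}`, `n ≥ 7`, `|S| ≥ 2`, then every gap of `S` has at most `4`
vertices. -/
theorem stmt_9 (n : ℕ) (hn : 7 ≤ n) (S : Finset (Fin n)) (hS : 2 ≤ S.card)
    (hres : IsNLResolving (wheel n) (S.image some))
    (hmin : (S.image some).card = nldim (wheel n)) :
    ∀ i j : Fin n, IsGap S i j → gapSize i j ≤ 4 := by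
  intro i j hgap
  by_contra hbig
  push_neg at hbig
  haveI : NeZero n := ⟨by omega⟩
  have hj6 : 6 ≤ (j - i).val := by
    unfold gapSize at hbig
    rcases Nat.eq_zero_or_pos (j - i).val with h0 | hpos
    · have : j - i = 0 := Fin.ext (by simp [h0])
      have hji : j = i := sub_eq_zero.mp this
      exact absurd hji.symm hgap.2.2.1
    · omega
  have notinS : ∀ m : ℕ, 0 < m → m ≤ 5 → i + (m : Fin n) ∉ S := by
    intro m hm0 hm5
    have hval : ((m : Fin n)).val = m := Fin.val_cast_of_lt (by omega)
    have hsub : (i + (m : Fin n)) - i = (m : Fin n) := by ring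
    exact hgap.2.2.2 _ (by rw [hsub, hval]; omega) (by rw [hsub, hval]; omega)
  set u : Fin n := i + ((2 : ℕ) : Fin n) with hu
  set v : Fin n := i + ((4 : ℕ) : Fin n) with hv
  have huv : u ≠ v := shift_ne i (by omega) (by omega) (by omega)
  -- u and v are not adjacent in the wheel
  have hnadj : ¬ (wheel n).Adj (some u) (some v) := by
    rw [wheel_adj_some]
    intro h
    rcases adj_shift (by omega) i u 4 (by omega) (by omega) h.symm with h2 | h2
    · exact shift_ne i (by omega : (2:ℕ) < n) (by omega : (5:ℕ) < n) (by omega) h2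
    · exact shift_ne i (by omega : (2:ℕ) < n) (by omega : (3:ℕ) < n) (by omega) h2
  obtain ⟨x, hxmem, hdist⟩ := hres (some u) (some v) (by simpa using huv) hnadj
  obtain ⟨s, hsS, rfl⟩ := Finset.mem_image.mp hxmem
  -- distance from u to s is 2
  have hd1 : (wheel n).dist (some u) (some s) = 2 := by
    apply wheel_dist_two
    · intro h
      have hmem : u ∈ S := h ▸ hsS
      rw [hu] at hmem
      exact notinS 2 (by omega) (by omega) hmem
    · rw [wheel_adj_some]
      intro h
      rcases adj_shift (by omega) i s 2 (by omega) (by omega) h with h2 | h2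
      · exact notinS 3 (by omega) (by omega) (h2 ▸ hsS)
      · exact notinS 1 (by omega) (by omega) (h2 ▸ hsS)
  have hd2 : (wheel n).dist (some v) (some s) = 2 := by
    apply wheel_dist_two
    · intro h
      have hmem : v ∈ S := h ▸ hsS
      rw [hv] at hmem
      exact notinS 4 (by omega) (by omega) hmem
    · rw [wheel_adj_some]
      intro h
      rcases adj_shift (by omega) i s 4 (by omega) (by omega) h with h2 | h2
      · exact notinS 5 (by omega) (by omega) (h2 ▸ hsS)
      · exact notinS 3 (by omega) (by omega) (h2 ▸ hsS)
  rw [hd1, hd2] at hdist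
  exact hdist rfl
end

section
/- For every n ≥ 7, the wheel W_{1,n} contains a nonlocal metric basis S' ⊆ V(C_n) such that: every gap of S' contains at most 4 vertices, at most one gap of S' contains 3 or more vertices, whenever a gap of S' contains at least 2 vertices each of its two neighboring gaps contains at most one vertex, and moreover S' has no gap of size exactly 3. -/
namespace S12
variable {n : ℕ} [NeZero n]
open Fin.CommRing

def cadj (x y : Fin n) : Prop := y = x + 1 ∨ x = y + 1
instance (x y : Fin n) : Decidable (cadj x y) := by unfold cadj; infer_instance

lemma shift_eq_iff (u : Fin n) (a b : ℕ) :
    u + (a : Fin n) = u + (b : Fin n) ↔ a % n = b % n := by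
  rw [add_right_inj, Fin.ext_iff, Fin.val_natCast, Fin.val_natCast]

lemma cast_comb (u : Fin n) (a b : ℕ) :
    u + (a : Fin n) + (b : Fin n) = u + ((a + b : ℕ) : Fin n) := by
  push_cast; ring

lemma shift_zero (u : Fin n) : u + ((0 : ℕ) : Fin n) = u := by simp

lemma shift_n (u : Fin n) : u + ((n : ℕ) : Fin n) = u := by
  simp [Fin.natCast_self]

lemma shift_reduce (u : Fin n) (a : ℕ) (ha : n ≤ a) :
    u + (a : Fin n) = u + ((a - n : ℕ) : Fin n) := by
  have h : a = (a - n) + n := by omega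
  rw [h, Nat.cast_add, Fin.natCast_self, add_zero, Nat.add_sub_cancel]

lemma shift_cancel (hn : 7 ≤ n) (u : Fin n) {a b : ℕ} (ha : a < n) (hb : b < n) :
    u + (a : Fin n) = u + (b : Fin n) ↔ a = b := by
  rw [shift_eq_iff, Nat.mod_eq_of_lt ha, Nat.mod_eq_of_lt hb]

lemma shift_ne (hn : 7 ≤ n) (u : Fin n) {a b : ℕ} (ha : a < n) (hb : b < n) (h : a ≠ b) :
    u + (a : Fin n) ≠ u + (b : Fin n) := by
  rw [Ne, shift_cancel hn u ha hb]; exact h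

lemma succ_shift (u : Fin n) (a : ℕ) :
    u + (a : Fin n) + 1 = u + ((a + 1 : ℕ) : Fin n) := by
  rw [← Nat.cast_one (R := Fin n), cast_comb]

lemma pred_succ (hn : 7 ≤ n) (u : Fin n) : u + ((n - 1 : ℕ) : Fin n) + 1 = u := by
  rw [succ_shift, show n - 1 + 1 = n by omega, shift_n]

lemma two_ones (x : Fin n) : x + 1 + 1 = x + ((2 : ℕ) : Fin n) := by
  push_cast; ring

lemma cadj_shift_iff (u : Fin n) (a b : ℕ) :
    cadj (u + (a : Fin n)) (u + (b : Fin n)) ↔ (b % n = (a + 1) % n ∨ a % n = (b + 1) % n) := by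
  unfold cadj
  rw [succ_shift, succ_shift, shift_eq_iff, shift_eq_iff]

lemma cadj_decide (hn : 7 ≤ n) (u : Fin n) {a b : ℕ} (ha : a < n) (hb : b < n) :
    cadj (u + (a : Fin n)) (u + (b : Fin n)) ↔
      (b = a + 1 ∨ a = b + 1 ∨ (a = n - 1 ∧ b = 0) ∨ (b = n - 1 ∧ a = 0)) := by
  rw [cadj_shift_iff]
  have h1 : (a + 1) % n = if a + 1 = n then 0 else a + 1 := by
    split_ifs with h
    · rw [h, Nat.mod_self]
    · exact Nat.mod_eq_of_lt (by omega)
  have h2 : (b + 1) % n = if b + 1 = n then 0 else b + 1 := by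
    split_ifs with h
    · rw [h, Nat.mod_self]
    · exact Nat.mod_eq_of_lt (by omega)
  rw [Nat.mod_eq_of_lt ha, Nat.mod_eq_of_lt hb, h1, h2]
  split_ifs <;> omega

lemma cadj_iff_shift (u x : Fin n) (a : ℕ) (ha : 1 ≤ a) :
    cadj x (u + (a : Fin n)) ↔ x = u + ((a - 1 : ℕ) : Fin n) ∨ x = u + ((a + 1 : ℕ) : Fin n) := by
  unfold cadj
  rw [succ_shift]
  have key : u + (a : Fin n) = u + ((a - 1 : ℕ) : Fin n) + 1 := by
    rw [succ_shift, show a - 1 + 1 = a by omega]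
  constructor
  · rintro (h | h)
    · left
      exact add_right_cancel (h.symm.trans key)
    · right; exact h
  · rintro (h | h)
    · left; rw [key, h]
    · right; exact h

lemma cadj_iff_shift0 (hn : 7 ≤ n) (u x : Fin n) :
    cadj x u ↔ x = u + ((1 : ℕ) : Fin n) ∨ x = u + ((n - 1 : ℕ) : Fin n) := by
  unfold cadj
  constructor
  · rintro (h | h)
    · right
      have : u + ((n - 1 : ℕ) : Fin n) + 1 = x + 1 := by rw [pred_succ hn, h]
      exact (add_right_cancel this).symm
    · left; rw [h, ← Nat.cast_one (R := Fin n)]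
  · rintro (h | h)
    · right; rw [h, ← Nat.cast_one (R := Fin n)]
    · left; rw [h, pred_succ hn]

def P (S : Finset (Fin n)) : Prop :=
  ∀ u v : Fin n, u ≠ v → ¬ cadj u v → ∃ x ∈ S, x = u ∨ x = v ∨ (cadj x u ↔ ¬ cadj x v)

def C1 (S : Finset (Fin n)) : Prop := ∀ u : Fin n, ∃ x ∈ S,
  x = u ∨ x = u + ((1 : ℕ) : Fin n) ∨ x = u + ((3 : ℕ) : Fin n) ∨ x = u + ((4 : ℕ) : Fin n)

def Cov (S : Finset (Fin n)) (u : Fin n) : Prop := ∃ x ∈ S,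
  x = u ∨ x = u + ((1 : ℕ) : Fin n) ∨ x = u + ((2 : ℕ) : Fin n)

def C2 (S : Finset (Fin n)) : Prop := ∀ u v : Fin n, ¬ Cov S u → ¬ Cov S v →
  v = u ∨ v = u + ((1 : ℕ) : Fin n) ∨ u = v + ((1 : ℕ) : Fin n)

lemma P_to_C1 (hn : 7 ≤ n) {S : Finset (Fin n)} (hP : P S) : C1 S := by
  intro u
  obtain ⟨x, hxS, hx⟩ := hP (u + ((1 : ℕ) : Fin n)) (u + ((3 : ℕ) : Fin n))
    (shift_ne hn u (by omega) (by omega) (by omega))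
    (by rw [cadj_decide hn u (by omega) (by omega)]; omega)
  refine ⟨x, hxS, ?_⟩
  rcases hx with h | h | hiff
  · exact Or.inr (Or.inl h)
  · exact Or.inr (Or.inr (Or.inl h))
  · by_cases hc : cadj x (u + ((1 : ℕ) : Fin n))
    · rcases (cadj_iff_shift u x 1 le_rfl).mp hc with h | h
      · left; rw [h]; exact shift_zero u
      · exact absurd (h ▸ (cadj_decide hn u (by omega : (2:ℕ) < n) (by omega : (3:ℕ) < n)).mpr
          (by omega)) (hiff.mp hc)
    · have hc3 : cadj x (u + ((3 : ℕ) : Fin n)) := by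
        by_contra hc3; exact hc (hiff.mpr hc3)
      rcases (cadj_iff_shift u x 3 (by omega)).mp hc3 with h | h
      · exact absurd (h ▸ (cadj_decide hn u (by omega : (2:ℕ) < n) (by omega : (1:ℕ) < n)).mpr
          (by omega)) hc
      · exact Or.inr (Or.inr (Or.inr h))

lemma P_to_C2 (hn : 7 ≤ n) {S : Finset (Fin n)} (hP : P S) : C2 S := by
  intro u v hu hv
  by_contra hcon
  push_neg at hcon
  obtain ⟨h1, h2, h3⟩ := hcon
  obtain ⟨x, hxS, hx⟩ := hP (u + ((1 : ℕ) : Fin n)) (v + ((1 : ℕ) : Fin n))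
    (fun h => h1 (add_right_cancel h).symm)
    (by
      intro hc
      rcases (cadj_iff_shift v _ 1 le_rfl).mp hc with h | h
      · rw [shift_zero] at h; exact h2 (h.symm ▸ rfl)
      · rw [show v + ((2:ℕ) : Fin n) = v + ((1:ℕ) : Fin n) + ((1:ℕ):Fin n) from (cast_comb v 1 1).symm] at h
        exact h3 (add_right_cancel h))
  rcases hx with h | h | hiff
  · exact hu ⟨x, hxS, Or.inr (Or.inl h)⟩
  · exact hv ⟨x, hxS, Or.inr (Or.inl h)⟩
  · by_cases hc : cadj x (u + ((1 : ℕ) : Fin n))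
    · rcases (cadj_iff_shift u x 1 le_rfl).mp hc with h | h
      · exact hu ⟨x, hxS, Or.inl (by rw [h, shift_zero])⟩
      · exact hu ⟨x, hxS, Or.inr (Or.inr h)⟩
    · have hc3 : cadj x (v + ((1 : ℕ) : Fin n)) := by
        by_contra hc3; exact hc (hiff.mpr hc3)
      rcases (cadj_iff_shift v x 1 le_rfl).mp hc3 with h | h
      · exact hv ⟨x, hxS, Or.inl (by rw [h, shift_zero])⟩
      · exact hv ⟨x, hxS, Or.inr (Or.inr h)⟩

end S12

namespace S12
variable {n : ℕ} [NeZero n]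
open Fin.CommRing

lemma C1_pair (hn : 7 ≤ n) {S : Finset (Fin n)} (hC1 : C1 S) (u : Fin n) :
    ∃ x ∈ S, x = u ∨ x = u + ((2 : ℕ) : Fin n) ∨
      (cadj x u ↔ ¬ cadj x (u + ((2 : ℕ) : Fin n))) := by
  obtain ⟨x, hxS, hx⟩ := hC1 (u + ((n - 1 : ℕ) : Fin n))
  have e1 : u + ((n - 1 : ℕ) : Fin n) + ((1 : ℕ) : Fin n) = u := by
    rw [cast_comb, show n - 1 + 1 = n by omega, shift_n]
  have e3 : u + ((n - 1 : ℕ) : Fin n) + ((3 : ℕ) : Fin n) = u + ((2 : ℕ) : Fin n) := by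
    rw [cast_comb, show n - 1 + 3 = n + 2 by omega, shift_reduce u (n + 2) (by omega),
      show n + 2 - n = 2 by omega]
  have e4 : u + ((n - 1 : ℕ) : Fin n) + ((4 : ℕ) : Fin n) = u + ((3 : ℕ) : Fin n) := by
    rw [cast_comb, show n - 1 + 4 = n + 3 by omega, shift_reduce u (n + 3) (by omega),
      show n + 3 - n = 3 by omega]
  refine ⟨x, hxS, ?_⟩
  rcases hx with h | h | h | h
  · right; right
    have hA : cadj x u := (cadj_iff_shift0 hn u x).mpr (Or.inr h)
    have hB : ¬ cadj x (u + ((2 : ℕ) : Fin n)) := by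
      intro hc
      rcases (cadj_iff_shift u x 2 (by omega)).mp hc with h' | h'
      · exact absurd (h.symm.trans h') (shift_ne hn u (by omega) (by omega) (by omega))
      · exact absurd (h.symm.trans h') (shift_ne hn u (by omega) (by omega) (by omega))
    exact ⟨fun _ => hB, fun _ => hA⟩
  · rw [e1] at h; exact Or.inl h
  · rw [e3] at h; exact Or.inr (Or.inl h)
  · rw [e4] at h
    right; right
    have hA : cadj x (u + ((2 : ℕ) : Fin n)) := (cadj_iff_shift u x 2 (by omega)).mpr (Or.inr h)
    have hB : ¬ cadj x u := by
      intro hc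
      rcases (cadj_iff_shift0 hn u x).mp hc with h' | h'
      · exact absurd (h.symm.trans h') (shift_ne hn u (by omega) (by omega) (by omega))
      · exact absurd (h.symm.trans h') (shift_ne hn u (by omega) (by omega) (by omega))
    exact ⟨fun hc => absurd hc hB, fun hc => absurd hA hc⟩

lemma C_to_P (hn : 7 ≤ n) {S : Finset (Fin n)} (hC1 : C1 S) (hC2 : C2 S) : P S := by
  intro u v huv hnc
  by_cases hv2 : v = u + ((2 : ℕ) : Fin n)
  · subst hv2; exact C1_pair hn hC1 u
  by_cases hu2 : u = v + ((2 : ℕ) : Fin n)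
  · obtain ⟨x, hxS, hx⟩ := C1_pair hn hC1 v
    refine ⟨x, hxS, ?_⟩
    rw [← hu2] at hx
    rcases hx with h | h | hiff
    · exact Or.inr (Or.inl h)
    · exact Or.inl h
    · right; right
      exact ⟨fun hA hB => (hiff.mp hB) hA,
        fun hB => Classical.byContradiction fun hA => hB (hiff.mpr hA)⟩
  by_cases hcu : Cov S (u + ((n - 1 : ℕ) : Fin n))
  · obtain ⟨x, hxS, hx⟩ := hcu
    have e1 : u + ((n - 1 : ℕ) : Fin n) + ((1 : ℕ) : Fin n) = u := by
      rw [cast_comb, show n - 1 + 1 = n by omega, shift_n]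
    have e2 : u + ((n - 1 : ℕ) : Fin n) + ((2 : ℕ) : Fin n) = u + ((1 : ℕ) : Fin n) := by
      rw [cast_comb, show n - 1 + 2 = n + 1 by omega, shift_reduce u (n + 1) (by omega),
        show n + 1 - n = 1 by omega]
    refine ⟨x, hxS, ?_⟩
    rcases hx with h | h | h
    · -- x = u - 1
      right; right
      have hA : cadj x u := (cadj_iff_shift0 hn u x).mpr (Or.inr h)
      have hB : ¬ cadj x v := by
        rintro (hc | hc)
        · rw [h, pred_succ hn] at hc; exact huv hc.symm
        · rw [h] at hc
          have : u = v + 1 + 1 := by rw [← hc, pred_succ hn]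
          rw [two_ones] at this
          exact hu2 this
      exact ⟨fun _ => hB, fun _ => hA⟩
    · rw [e1] at h; exact Or.inl h
    · rw [e2] at h
      right; right
      have hA : cadj x u := by
        right; rw [h, ← Nat.cast_one (R := Fin n)]
      have hB : ¬ cadj x v := by
        rintro (hc | hc)
        · rw [h, succ_shift] at hc; exact hv2 hc
        · rw [← Nat.cast_one (R := Fin n)] at hc
          exact huv (add_right_cancel (h.symm.trans hc))
      exact ⟨fun _ => hB, fun _ => hA⟩
  by_cases hcv : Cov S (v + ((n - 1 : ℕ) : Fin n))
  · obtain ⟨x, hxS, hx⟩ := hcv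
    have e1 : v + ((n - 1 : ℕ) : Fin n) + ((1 : ℕ) : Fin n) = v := by
      rw [cast_comb, show n - 1 + 1 = n by omega, shift_n]
    have e2 : v + ((n - 1 : ℕ) : Fin n) + ((2 : ℕ) : Fin n) = v + ((1 : ℕ) : Fin n) := by
      rw [cast_comb, show n - 1 + 2 = n + 1 by omega, shift_reduce v (n + 1) (by omega),
        show n + 1 - n = 1 by omega]
    refine ⟨x, hxS, ?_⟩
    rcases hx with h | h | h
    · right; right
      have hA : cadj x v := (cadj_iff_shift0 hn v x).mpr (Or.inr h)
      have hB : ¬ cadj x u := by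
        rintro (hc | hc)
        · rw [h, pred_succ hn] at hc; exact huv hc
        · rw [h] at hc
          have : v = u + 1 + 1 := by rw [← hc, pred_succ hn]
          rw [two_ones] at this
          exact hv2 this
      exact ⟨fun hc => absurd hc hB, fun hc => absurd hA hc⟩
    · rw [e1] at h; exact Or.inr (Or.inl h)
    · rw [e2] at h
      right; right
      have hA : cadj x v := by
        right; rw [h, ← Nat.cast_one (R := Fin n)]
      have hB : ¬ cadj x u := by
        rintro (hc | hc)
        · rw [h, succ_shift] at hc; exact hu2 hc
        · rw [← Nat.cast_one (R := Fin n)] at hc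
          exact huv (add_right_cancel (h.symm.trans hc)).symm
      exact ⟨fun hc => absurd hc hB, fun hc => absurd hA hc⟩
  · exfalso
    rcases hC2 _ _ hcu hcv with h | h | h
    · exact huv (add_right_cancel h).symm
    · rw [cast_comb, show n - 1 + 1 = n by omega, shift_n] at h
      -- h : v + (n-1) = u
      have : v = u + ((1 : ℕ) : Fin n) := by
        rw [← h, cast_comb, show n - 1 + 1 = n by omega, shift_n]
      exact hnc (Or.inl (by rw [this, ← Nat.cast_one (R := Fin n)]))
    · rw [cast_comb, show n - 1 + 1 = n by omega, shift_n] at h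
      have : u = v + ((1 : ℕ) : Fin n) := by
        rw [← h, cast_comb, show n - 1 + 1 = n by omega, shift_n]
      exact hnc (Or.inr (by rw [this, ← Nat.cast_one (R := Fin n)]))

end S12

namespace S12
open SimpleGraph
variable {n : ℕ} [NeZero n]
open Fin.CommRing

lemma cycle_adj_iff (hn : 2 ≤ n) (a b : Fin n) :
    (SimpleGraph.cycleGraph n).Adj a b ↔ cadj a b := by
  rw [cycleGraph_adj']
  have h1 : (1 : Fin n).val = 1 := by
    simp [Fin.val_one', Nat.mod_eq_of_lt (by omega : 1 < n)]
  constructor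
  · rintro (h | h)
    · right; have : a - b = 1 := Fin.ext (by rw [h, h1])
      rw [← this]; ring
    · left; have : b - a = 1 := Fin.ext (by rw [h, h1])
      rw [← this]; ring
  · rintro (rfl | rfl)
    · right; rw [add_sub_cancel_left, h1]
    · left; rw [add_sub_cancel_left, h1]

lemma wheel_adj_none (a : Fin n) : (wheel n).Adj none (some a) := by
  refine ⟨by simp, Or.inl (Or.inl rfl)⟩

lemma wheel_adj_some (hn : 2 ≤ n) (a b : Fin n) :
    (wheel n).Adj (some a) (some b) ↔ cadj a b := by
  constructor
  · rintro ⟨hne, h | h⟩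
    · rcases h with h | ⟨w, w', hw, hw', hadj⟩
      · exact absurd h (by simp)
      · cases hw; cases hw'; exact (cycle_adj_iff hn _ _).mp hadj
    · rcases h with h | ⟨w, w', hw, hw', hadj⟩
      · exact absurd h (by simp)
      · cases hw; cases hw'
        exact (cycle_adj_iff hn _ _).mp hadj.symm
  · intro h
    have h' := (cycle_adj_iff hn a b).mpr h
    exact ⟨by simpa using h'.ne, Or.inl (Or.inr ⟨a, b, rfl, rfl, h'⟩)⟩

lemma wheel_dist_some_none (a : Fin n) : (wheel n).dist (some a) none = 1 :=
  SimpleGraph.dist_eq_one_iff_adj.mpr (wheel_adj_none a).symm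

lemma wheel_dist_some_some (hn : 2 ≤ n) (a b : Fin n) :
    (wheel n).dist (some a) (some b) = if a = b then 0 else if cadj a b then 1 else 2 := by
  split_ifs with h1 h2
  · subst h1; exact SimpleGraph.dist_self
  · exact SimpleGraph.dist_eq_one_iff_adj.mpr ((wheel_adj_some hn a b).mpr h2)
  · have hadj1 : (wheel n).Adj (some a) none := (wheel_adj_none a).symm
    have hadj2 : (wheel n).Adj none (some b) := wheel_adj_none b
    have hle : (wheel n).dist (some a) (some b) ≤ 2 := by
      have := SimpleGraph.dist_le
        (SimpleGraph.Walk.cons hadj1 (SimpleGraph.Walk.cons hadj2 SimpleGraph.Walk.nil))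
      simpa using this
    have hreach : (wheel n).Reachable (some a) (some b) :=
      ⟨SimpleGraph.Walk.cons hadj1 (SimpleGraph.Walk.cons hadj2 SimpleGraph.Walk.nil)⟩
    have h0 : ¬ (wheel n).dist (some a) (some b) = 0 := by
      rw [hreach.dist_eq_zero_iff]
      simpa using h1
    have hne1 : ¬ (wheel n).dist (some a) (some b) = 1 := by
      rw [SimpleGraph.dist_eq_one_iff_adj, wheel_adj_some hn]
      exact h2
    omega

lemma res_iff (hn : 7 ≤ n) (S : Finset (Fin n)) :
    IsNLResolving (wheel n) (S.image some) ↔ P S := by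
  have h2 : 2 ≤ n := by omega
  constructor
  · intro H u v huv hnc
    obtain ⟨x', hx', hd⟩ := H (some u) (some v) (by simpa using huv)
      (by rw [wheel_adj_some h2]; exact hnc)
    simp only [Finset.mem_image] at hx'
    obtain ⟨x, hxS, rfl⟩ := hx'
    refine ⟨x, hxS, ?_⟩
    rw [wheel_dist_some_some h2, wheel_dist_some_some h2] at hd
    by_cases hxu : u = x
    · exact Or.inl hxu.symm
    by_cases hxv : v = x
    · exact Or.inr (Or.inl hxv.symm)
    right; right
    simp only [if_neg hxu, if_neg hxv] at hd
    have cux : cadj u x ↔ cadj x u := or_comm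
    have cvx : cadj v x ↔ cadj x v := or_comm
    by_cases h3 : cadj x u <;> by_cases h4 : cadj x v <;>
      simp_all [cux, cvx]
  · intro H u' v' huv hna
    match u', v' with
    | none, none => exact absurd rfl huv
    | none, some b => exact absurd (wheel_adj_none b) hna
    | some a, none => exact absurd (wheel_adj_none a).symm hna
    | some a, some b =>
      have hab : a ≠ b := by simpa using huv
      have hnc : ¬ cadj a b := fun hc => hna ((wheel_adj_some h2 a b).mpr hc)
      obtain ⟨x, hxS, hx⟩ := H a b hab hnc
      refine ⟨some x, Finset.mem_image_of_mem _ hxS, ?_⟩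
      rw [wheel_dist_some_some h2, wheel_dist_some_some h2]
      have cax : cadj a x ↔ cadj x a := or_comm
      have cbx : cadj b x ↔ cadj x b := or_comm
      by_cases hax : a = x
      · rw [if_pos hax, if_neg (show b ≠ x from fun h => hab (hax.trans h.symm))]
        split_ifs <;> omega
      by_cases hbx : b = x
      · rw [if_pos hbx, if_neg hax]
        split_ifs <;> omega
      rw [if_neg hax, if_neg hbx]
      have hiff : cadj x a ↔ ¬ cadj x b := by
        rcases hx with rfl | rfl | hiff
        · exact absurd rfl hax
        · exact absurd rfl hbx
        · exact hiff
      by_cases h3 : cadj a x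
      · have h4 : ¬ cadj b x := fun hc => (hiff.mp (cax.mp h3)) (cbx.mp hc)
        rw [if_pos h3, if_neg h4]; omega
      · have hxa : ¬ cadj x a := fun hc => h3 (cax.mpr hc)
        have h4 : cadj b x := cbx.mpr (by by_contra hnb; exact hxa (hiff.mpr hnb))
        rw [if_neg h3, if_pos h4]; omega

end S12

namespace S12
variable {n : ℕ} [NeZero n]
open Fin.CommRing

lemma gap_pos {S : Finset (Fin n)} {i j : Fin n} (hg : IsGap S i j) : 0 < (j - i).val := by
  rcases Nat.eq_zero_or_pos (j - i).val with h | h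
  · exact absurd (sub_eq_zero.mp (Fin.ext (by rw [h]; simp))) (Ne.symm hg.2.2.1)
  · exact h

lemma gap_expand {S : Finset (Fin n)} {i j : Fin n} (hg : IsGap S i j) :
    j = i + (((j - i).val : ℕ) : Fin n) := by
  rw [Fin.cast_val_eq_self]; ring

lemma gap_interior {S : Finset (Fin n)} {i j : Fin n} (hg : IsGap S i j) {t : ℕ}
    (h0 : 0 < t) (hlt : t < (j - i).val) : i + (t : Fin n) ∉ S := by
  have hv : ((i + (t : Fin n)) - i).val = t := by
    rw [add_sub_cancel_left, Fin.val_natCast, Nat.mod_eq_of_lt (lt_trans hlt (j - i).isLt)]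
  exact hg.2.2.2 _ (by rw [hv]; exact h0) (by rw [hv]; exact hlt)

lemma gap_right_unique {S : Finset (Fin n)} {i j j' : Fin n}
    (hg : IsGap S i j) (hg' : IsGap S i j') : j = j' := by
  rcases lt_trichotomy (j - i).val (j' - i).val with h | h | h
  · exact absurd hg.2.1 (by rw [gap_expand hg]; exact gap_interior hg' (gap_pos hg) h)
  · exact sub_left_inj.mp (Fin.val_injective h)
  · exact absurd hg'.2.1 (by rw [gap_expand hg']; exact gap_interior hg (gap_pos hg') h)

lemma comb (u : Fin n) (a b c : ℕ) (h : a + b = c) :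
    u + (a : Fin n) + (b : Fin n) = u + (c : Fin n) := by rw [cast_comb, h]

lemma uncovered_of_gap (hn : 7 ≤ n) {S : Finset (Fin n)} {i j : Fin n}
    (hg : IsGap S i j) (h4 : 4 ≤ (j - i).val) : ¬ Cov S (i + ((1 : ℕ) : Fin n)) := by
  rintro ⟨x, hxS, h | h | h⟩
  · exact gap_interior hg (by omega) (by omega) (h ▸ hxS)
  · rw [comb i 1 1 2 (by norm_num)] at h
    exact gap_interior hg (by omega) (by omega) (h ▸ hxS)
  · rw [comb i 1 2 3 (by norm_num)] at h
    exact gap_interior hg (by omega) (by omega) (h ▸ hxS)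

lemma cond1 (hn : 7 ≤ n) {S : Finset (Fin n)} (hC1 : C1 S) {i j : Fin n}
    (hg : IsGap S i j) : (j - i).val ≤ 5 := by
  by_contra hcon
  push_neg at hcon
  obtain ⟨x, hxS, hx⟩ := hC1 (i + ((1 : ℕ) : Fin n))
  rw [comb i 1 1 2 (by norm_num), comb i 1 3 4 (by norm_num), comb i 1 4 5 (by norm_num)] at hx
  rcases hx with h | h | h | h
  · exact gap_interior hg (by omega) (by omega) (h ▸ hxS)
  · exact gap_interior hg (by omega) (by omega) (h ▸ hxS)
  · exact gap_interior hg (by omega) (by omega) (h ▸ hxS)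
  · exact gap_interior hg (by omega) (by omega) (h ▸ hxS)

lemma cond2 (hn : 7 ≤ n) {S : Finset (Fin n)} (hC2 : C2 S) {i j i' j' : Fin n}
    (hg : IsGap S i j) (hg' : IsGap S i' j')
    (h4 : 4 ≤ (j - i).val) (h4' : 4 ≤ (j' - i').val) : i = i' ∧ j = j' := by
  have key : i = i' := by
    rcases hC2 _ _ (uncovered_of_gap hn hg h4) (uncovered_of_gap hn hg' h4') with h | h | h
    · exact (add_right_cancel h).symm
    · rw [comb i 1 1 2 (by norm_num)] at h
      have : i' = i + ((1 : ℕ) : Fin n) :=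
        add_right_cancel (h.trans (comb i 1 1 2 (by norm_num)).symm)
      exact absurd hg'.1 (this ▸ gap_interior hg (by omega) (by omega))
    · rw [comb i' 1 1 2 (by norm_num)] at h
      have : i = i' + ((1 : ℕ) : Fin n) :=
        add_right_cancel (h.trans (comb i' 1 1 2 (by norm_num)).symm)
      exact absurd hg.1 (this ▸ gap_interior hg' (by omega) (by omega))
  subst key
  exact ⟨rfl, gap_right_unique hg hg'⟩

lemma cond3 (hn : 7 ≤ n) {S : Finset (Fin n)} (hC1 : C1 S) {h i j : Fin n}
    (hg1 : IsGap S h i) (hg2 : IsGap S i j)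
    (h3 : 3 ≤ (i - h).val) (h3' : 3 ≤ (j - i).val) : False := by
  set d := (i - h).val with hd
  have hdn : d < n := (i - h).isLt
  have hie : i = h + ((d : ℕ) : Fin n) := gap_expand hg1
  obtain ⟨x, hxS, hx⟩ := hC1 (i + ((n - 2 : ℕ) : Fin n))
  have e0 : i + ((n - 2 : ℕ) : Fin n) = h + ((d - 2 : ℕ) : Fin n) := by
    rw [hie, cast_comb, show d + (n - 2) = (d - 2) + n by omega, Nat.cast_add,
      Fin.natCast_self, add_zero]
  have e1 : i + ((n - 2 : ℕ) : Fin n) + ((1 : ℕ) : Fin n) = h + ((d - 1 : ℕ) : Fin n) := by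
    rw [e0, cast_comb, show d - 2 + 1 = d - 1 by omega]
  have e3 : i + ((n - 2 : ℕ) : Fin n) + ((3 : ℕ) : Fin n) = i + ((1 : ℕ) : Fin n) := by
    rw [cast_comb, show n - 2 + 3 = n + 1 by omega, shift_reduce i (n + 1) (by omega),
      show n + 1 - n = 1 by omega]
  have e4 : i + ((n - 2 : ℕ) : Fin n) + ((4 : ℕ) : Fin n) = i + ((2 : ℕ) : Fin n) := by
    rw [cast_comb, show n - 2 + 4 = n + 2 by omega, shift_reduce i (n + 2) (by omega),
      show n + 2 - n = 2 by omega]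
  rw [e1, e3, e4, e0] at hx
  rcases hx with h' | h' | h' | h'
  · exact gap_interior hg1 (by omega) (by omega) (h' ▸ hxS)
  · exact gap_interior hg1 (by omega) (by omega) (h' ▸ hxS)
  · exact gap_interior hg2 (by omega) (by omega) (h' ▸ hxS)
  · exact gap_interior hg2 (by omega) (by omega) (h' ▸ hxS)

lemma surgery (hn : 7 ≤ n) {S : Finset (Fin n)} (hC1 : C1 S) (hC2 : C2 S) {i j : Fin n}
    (hg : IsGap S i j) (h4 : (j - i).val = 4) :
    ∃ T : Finset (Fin n), C1 T ∧ C2 T ∧ T.card = S.card ∧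
      ∀ a b : Fin n, IsGap T a b → (b - a).val ≠ 4 := by
  have hiS := hg.1
  have hjS := hg.2.1
  have hje : j = i + ((4 : ℕ) : Fin n) := by rw [gap_expand hg, h4]
  have hni1 : i + ((1 : ℕ) : Fin n) ∉ S := gap_interior hg (by omega) (by omega)
  have hni2 : i + ((2 : ℕ) : Fin n) ∉ S := gap_interior hg (by omega) (by omega)
  have hni3 : i + ((3 : ℕ) : Fin n) ∉ S := gap_interior hg (by omega) (by omega)
  have hCovi : Cov S i := ⟨i, hiS, Or.inl rfl⟩
  have hCovi2 : Cov S (i + ((2 : ℕ) : Fin n)) :=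
    ⟨j, hjS, Or.inr (Or.inr (by rw [hje, comb i 2 2 4 (by norm_num)]))⟩
  have unc : ∀ z, ¬ Cov S z → z = i + ((1 : ℕ) : Fin n) := by
    intro z hz
    rcases hC2 z _ hz (uncovered_of_gap hn hg (by omega)) with h | h | h
    · exact h.symm
    · have hzi : z = i := add_right_cancel h.symm
      exact absurd hCovi (hzi ▸ hz)
    · rw [comb i 1 1 2 (by norm_num)] at h
      exact absurd hCovi2 (h ▸ hz)
  have hine4 : i ≠ i + ((4 : ℕ) : Fin n) := by
    have := shift_ne hn i (a := 0) (b := 4) (by omega) (by omega) (by omega)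
    rwa [shift_zero] at this
  have hiTne : i ≠ j := fun h => hine4 (h.trans hje)
  by_cases hw : i + ((5 : ℕ) : Fin n) ∈ S
  · -- Case B : move j to j - 1 = i + 3
    refine ⟨insert (i + ((3 : ℕ) : Fin n)) (S.erase j), ?_, ?_, ?_, ?_⟩
    case _ =>
      -- auxiliary memberships
      intro u
      obtain ⟨x, hxS, hx⟩ := hC1 u
      by_cases hxj : x = j
      · rcases hx with h | h | h | h
        · -- u = i + 4 ; witness i + 5 = u + 1
          have hu : u = i + ((4 : ℕ) : Fin n) := (h.symm.trans hxj).trans hje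
          refine ⟨i + ((5 : ℕ) : Fin n),
            Finset.mem_insert_of_mem (Finset.mem_erase.mpr
              ⟨fun hh => shift_ne hn i (a := 5) (b := 4) (by omega) (by omega) (by omega)
                (hh.trans hje), hw⟩),
            Or.inr (Or.inl ?_)⟩
          rw [hu, comb i 4 1 5 (by norm_num)]
        · -- u = i + 3 ; witness i + 3 = u
          have hu : u = i + ((3 : ℕ) : Fin n) := add_right_cancel
            ((((h.symm.trans hxj).trans hje)).trans (comb i 3 1 4 (by norm_num)).symm)
          exact ⟨i + ((3 : ℕ) : Fin n), Finset.mem_insert_self _ _, Or.inl hu.symm⟩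
        · -- u = i + 1 ; witness i + 5 = u + 4
          have hu : u = i + ((1 : ℕ) : Fin n) := add_right_cancel
            ((((h.symm.trans hxj).trans hje)).trans (comb i 1 3 4 (by norm_num)).symm)
          refine ⟨i + ((5 : ℕ) : Fin n),
            Finset.mem_insert_of_mem (Finset.mem_erase.mpr
              ⟨fun hh => shift_ne hn i (a := 5) (b := 4) (by omega) (by omega) (by omega)
                (hh.trans hje), hw⟩),
            Or.inr (Or.inr (Or.inr ?_))⟩
          rw [hu, comb i 1 4 5 (by norm_num)]
        · -- u = i ; witness i = u
          have hu : u = i := add_right_cancel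
            ((((h.symm.trans hxj).trans hje)).trans (by rw [← shift_zero i, cast_comb]))
          exact ⟨i, Finset.mem_insert_of_mem (Finset.mem_erase.mpr ⟨hiTne, hiS⟩),
            Or.inl hu.symm⟩
      · exact ⟨x, Finset.mem_insert_of_mem (Finset.mem_erase.mpr ⟨hxj, hxS⟩), hx⟩
    case _ =>
      -- C2: there is no uncovered vertex at all
      have claimB : ∀ z, ¬ Cov (insert (i + ((3 : ℕ) : Fin n)) (S.erase j)) z → False := by
        intro z hz
        have hmem3 : i + ((3 : ℕ) : Fin n) ∈ insert (i + ((3 : ℕ) : Fin n)) (S.erase j) :=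
          Finset.mem_insert_self _ _
        have hmem5 : i + ((5 : ℕ) : Fin n) ∈ insert (i + ((3 : ℕ) : Fin n)) (S.erase j) :=
          Finset.mem_insert_of_mem (Finset.mem_erase.mpr
            ⟨fun hh => shift_ne hn i (a := 5) (b := 4) (by omega) (by omega) (by omega)
              (hh.trans hje), hw⟩)
        by_cases hcovS : Cov S z
        · obtain ⟨x, hxS, hor⟩ := hcovS
          by_cases hxj : x = j
          · rw [hxj, hje] at hor
            rcases hor with h | h | h
            · -- z = i + 4
              exact hz ⟨i + ((5 : ℕ) : Fin n), hmem5,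
                Or.inr (Or.inl (by rw [← h, comb i 4 1 5 (by norm_num)]))⟩
            · -- z = i + 3
              have hzv : z = i + ((3 : ℕ) : Fin n) := add_right_cancel
                (h.symm.trans (comb i 3 1 4 (by norm_num)).symm)
              exact hz ⟨i + ((3 : ℕ) : Fin n), hmem3, Or.inl hzv.symm⟩
            · -- z = i + 2
              have hzv : z = i + ((2 : ℕ) : Fin n) := add_right_cancel
                (h.symm.trans (comb i 2 2 4 (by norm_num)).symm)
              exact hz ⟨i + ((3 : ℕ) : Fin n), hmem3,
                Or.inr (Or.inl (by rw [hzv, comb i 2 1 3 (by norm_num)]))⟩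
          · exact hz ⟨x, Finset.mem_insert_of_mem (Finset.mem_erase.mpr ⟨hxj, hxS⟩), hor⟩
        · have hz1 : z = i + ((1 : ℕ) : Fin n) := unc z hcovS
          exact hz ⟨i + ((3 : ℕ) : Fin n), hmem3,
            Or.inr (Or.inr (by rw [hz1, comb i 1 2 3 (by norm_num)]))⟩
      intro u v hu _
      exact absurd (claimB u hu) id
    case _ =>
      rw [Finset.card_insert_of_notMem (fun hmem => hni3 (Finset.mem_erase.mp hmem).2),
        Finset.card_erase_of_mem hjS]
      have : 0 < S.card := Finset.card_pos.mpr ⟨j, hjS⟩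
      omega
    case _ =>
      intro a b hab hv4
      have claimB : ∀ z, ¬ Cov (insert (i + ((3 : ℕ) : Fin n)) (S.erase j)) z → False := by
        intro z hz
        have hmem3 : i + ((3 : ℕ) : Fin n) ∈ insert (i + ((3 : ℕ) : Fin n)) (S.erase j) :=
          Finset.mem_insert_self _ _
        have hmem5 : i + ((5 : ℕ) : Fin n) ∈ insert (i + ((3 : ℕ) : Fin n)) (S.erase j) :=
          Finset.mem_insert_of_mem (Finset.mem_erase.mpr
            ⟨fun hh => shift_ne hn i (a := 5) (b := 4) (by omega) (by omega) (by omega)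
              (hh.trans hje), hw⟩)
        by_cases hcovS : Cov S z
        · obtain ⟨x, hxS, hor⟩ := hcovS
          by_cases hxj : x = j
          · rw [hxj, hje] at hor
            rcases hor with h | h | h
            · exact hz ⟨i + ((5 : ℕ) : Fin n), hmem5,
                Or.inr (Or.inl (by rw [← h, comb i 4 1 5 (by norm_num)]))⟩
            · have hzv : z = i + ((3 : ℕ) : Fin n) := add_right_cancel
                (h.symm.trans (comb i 3 1 4 (by norm_num)).symm)
              exact hz ⟨i + ((3 : ℕ) : Fin n), hmem3, Or.inl hzv.symm⟩
            · have hzv : z = i + ((2 : ℕ) : Fin n) := add_right_cancel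
                (h.symm.trans (comb i 2 2 4 (by norm_num)).symm)
              exact hz ⟨i + ((3 : ℕ) : Fin n), hmem3,
                Or.inr (Or.inl (by rw [hzv, comb i 2 1 3 (by norm_num)]))⟩
          · exact hz ⟨x, Finset.mem_insert_of_mem (Finset.mem_erase.mpr ⟨hxj, hxS⟩), hor⟩
        · have hz1 : z = i + ((1 : ℕ) : Fin n) := unc z hcovS
          exact hz ⟨i + ((3 : ℕ) : Fin n), hmem3,
            Or.inr (Or.inr (by rw [hz1, comb i 1 2 3 (by norm_num)]))⟩
      exact claimB _ (uncovered_of_gap hn hab (by omega))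
  · -- Case A : move j to j + 1 = i + 5
    have hj26 : i + ((6 : ℕ) : Fin n) ∈ S := by
      obtain ⟨x, hxS, hx⟩ := hC1 (i + ((2 : ℕ) : Fin n))
      rw [comb i 2 1 3 (by norm_num), comb i 2 3 5 (by norm_num),
        comb i 2 4 6 (by norm_num)] at hx
      rcases hx with h | h | h | h
      · exact absurd (h ▸ hxS) hni2
      · exact absurd (h ▸ hxS) hni3
      · exact absurd (h ▸ hxS) hw
      · exact h ▸ hxS
    have hmem5 : i + ((5 : ℕ) : Fin n) ∈ insert (i + ((5 : ℕ) : Fin n)) (S.erase j) :=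
      Finset.mem_insert_self _ _
    have hmem6 : i + ((6 : ℕ) : Fin n) ∈ insert (i + ((5 : ℕ) : Fin n)) (S.erase j) :=
      Finset.mem_insert_of_mem (Finset.mem_erase.mpr
        ⟨fun hh => shift_ne hn i (a := 6) (b := 4) (by omega) (by omega) (by omega)
          (hh.trans hje), hj26⟩)
    have hmemi : i ∈ insert (i + ((5 : ℕ) : Fin n)) (S.erase j) :=
      Finset.mem_insert_of_mem (Finset.mem_erase.mpr ⟨hiTne, hiS⟩)
    have claimA : ∀ z, ¬ Cov (insert (i + ((5 : ℕ) : Fin n)) (S.erase j)) z →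
        z = i + ((1 : ℕ) : Fin n) ∨ z = i + ((2 : ℕ) : Fin n) := by
      intro z hz
      by_cases hcovS : Cov S z
      · obtain ⟨x, hxS, hor⟩ := hcovS
        by_cases hxj : x = j
        · rw [hxj, hje] at hor
          rcases hor with h | h | h
          · exact absurd ⟨i + ((5 : ℕ) : Fin n), hmem5,
              Or.inr (Or.inl (by rw [← h, comb i 4 1 5 (by norm_num)]))⟩ hz
          · have hzv : z = i + ((3 : ℕ) : Fin n) := add_right_cancel
              (h.symm.trans (comb i 3 1 4 (by norm_num)).symm)
            exact absurd ⟨i + ((5 : ℕ) : Fin n), hmem5,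
              Or.inr (Or.inr (by rw [hzv, comb i 3 2 5 (by norm_num)]))⟩ hz
          · right
            exact add_right_cancel (h.symm.trans (comb i 2 2 4 (by norm_num)).symm)
        · exact absurd ⟨x, Finset.mem_insert_of_mem (Finset.mem_erase.mpr ⟨hxj, hxS⟩), hor⟩ hz
      · exact Or.inl (unc z hcovS)
    refine ⟨insert (i + ((5 : ℕ) : Fin n)) (S.erase j), ?_, ?_, ?_, ?_⟩
    case _ =>
      intro u
      obtain ⟨x, hxS, hx⟩ := hC1 u
      by_cases hxj : x = j
      · rcases hx with h | h | h | h
        · have hu : u = i + ((4 : ℕ) : Fin n) := (h.symm.trans hxj).trans hje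
          refine ⟨i + ((5 : ℕ) : Fin n), hmem5, Or.inr (Or.inl ?_)⟩
          rw [hu, comb i 4 1 5 (by norm_num)]
        · have hu : u = i + ((3 : ℕ) : Fin n) := add_right_cancel
            ((((h.symm.trans hxj).trans hje)).trans (comb i 3 1 4 (by norm_num)).symm)
          refine ⟨i + ((6 : ℕ) : Fin n), hmem6, Or.inr (Or.inr (Or.inl ?_))⟩
          rw [hu, comb i 3 3 6 (by norm_num)]
        · have hu : u = i + ((1 : ℕ) : Fin n) := add_right_cancel
            ((((h.symm.trans hxj).trans hje)).trans (comb i 1 3 4 (by norm_num)).symm)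
          refine ⟨i + ((5 : ℕ) : Fin n), hmem5, Or.inr (Or.inr (Or.inr ?_))⟩
          rw [hu, comb i 1 4 5 (by norm_num)]
        · have hu : u = i := add_right_cancel
            ((((h.symm.trans hxj).trans hje)).trans (by rw [← shift_zero i, cast_comb]))
          exact ⟨i, hmemi, Or.inl hu.symm⟩
      · exact ⟨x, Finset.mem_insert_of_mem (Finset.mem_erase.mpr ⟨hxj, hxS⟩), hx⟩
    case _ =>
      intro u v hu hv
      rcases claimA u hu with h1 | h1 <;> rcases claimA v hv with h2 | h2
      · exact Or.inl (h2.trans h1.symm)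
      · exact Or.inr (Or.inl (by rw [h1, h2, comb i 1 1 2 (by norm_num)]))
      · exact Or.inr (Or.inr (by rw [h1, h2, comb i 1 1 2 (by norm_num)]))
      · exact Or.inl (h2.trans h1.symm)
    case _ =>
      rw [Finset.card_insert_of_notMem (fun hmem => hw (Finset.mem_erase.mp hmem).2),
        Finset.card_erase_of_mem hjS]
      have : 0 < S.card := Finset.card_pos.mpr ⟨j, hjS⟩
      omega
    case _ =>
      intro a b hab hv4
      have hbe : b = a + ((4 : ℕ) : Fin n) := by rw [gap_expand hab, hv4]
      rcases claimA _ (uncovered_of_gap hn hab (by omega)) with h | h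
      · have ha : a = i := add_right_cancel h
        have hbj : b = j := by rw [hbe, ha, hje]
        have hbT := hab.2.1
        rw [hbj] at hbT
        rcases Finset.mem_insert.mp hbT with h' | h'
        · exact shift_ne hn i (a := 4) (b := 5) (by omega) (by omega) (by omega)
            (hje.symm.trans h')
        · exact (Finset.mem_erase.mp h').1 rfl
      · have ha : a = i + ((1 : ℕ) : Fin n) := add_right_cancel
          (h.trans (comb i 1 1 2 (by norm_num)).symm)
        have haT := hab.1
        rw [ha] at haT
        rcases Finset.mem_insert.mp haT with h' | h'
        · exact shift_ne hn i (a := 1) (b := 5) (by omega) (by omega) (by omega) h'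
        · exact hni1 (Finset.mem_erase.mp h').2

end S12


/-- For `n ≥ 7`, the wheel `W_{1,n}` has a nonlocal metric basis
`S' ⊆ V(Cₙ)` all of whose gaps have at most `4` vertices, with at most one gap
of `3` or more vertices, such that gaps of at least `2` vertices have
neighboring gaps with at most one vertex, and with no gap of size exactly `3`. -/
theorem stmt_12 (n : ℕ) (hn : 7 ≤ n) :
    ∃ S : Finset (Fin n),
      IsNLResolving (wheel n) (S.image some) ∧
      (S.image some).card = nldim (wheel n) ∧
      (∀ i j : Fin n, IsGap S i j → gapSize i j ≤ 4) ∧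
      (∀ i j i' j' : Fin n, IsGap S i j → IsGap S i' j' →
        3 ≤ gapSize i j → 3 ≤ gapSize i' j' → i = i' ∧ j = j') ∧
      (∀ i j : Fin n, IsGap S i j → 2 ≤ gapSize i j →
        (∀ h : Fin n, IsGap S h i → gapSize h i ≤ 1) ∧
        (∀ k : Fin n, IsGap S j k → gapSize j k ≤ 1)) ∧
      (∀ i j : Fin n, IsGap S i j → gapSize i j ≠ 3) := by
  haveI : NeZero n := ⟨by omega⟩
  classical
  set M := {m | ∃ X : Finset (Option (Fin n)), X.card = m ∧ IsNLResolving (wheel n) X} with hM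
  have hPuniv : S12.P (n := n) Finset.univ :=
    fun u v _ _ => ⟨u, Finset.mem_univ u, Or.inl rfl⟩
  have hres_univ : IsNLResolving (wheel n) ((Finset.univ : Finset (Fin n)).image some) :=
    (S12.res_iff hn Finset.univ).mpr hPuniv
  have hMne : M.Nonempty := ⟨_, _, rfl, hres_univ⟩
  have hnldim : nldim (wheel n) = sInf M := rfl
  have hmem : nldim (wheel n) ∈ M := by rw [hnldim]; exact Nat.sInf_mem hMne
  obtain ⟨X, hXcard, hXres⟩ := hmem
  have hnone : none ∉ X := by
    intro hmemX
    have herase : IsNLResolving (wheel n) (X.erase none) := by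
      intro u v huv hadj
      match u, v with
      | none, none => exact absurd rfl huv
      | none, some b => exact absurd (S12.wheel_adj_none b) hadj
      | some a, none => exact absurd (S12.wheel_adj_none a).symm hadj
      | some a, some b =>
        obtain ⟨x, hxX, hdx⟩ := hXres (some a) (some b) huv hadj
        refine ⟨x, Finset.mem_erase.mpr ⟨?_, hxX⟩, hdx⟩
        rintro rfl
        exact hdx (by rw [S12.wheel_dist_some_none, S12.wheel_dist_some_none])
    have hsle : sInf M ≤ (X.erase none).card := Nat.sInf_le ⟨X.erase none, rfl, herase⟩
    have hpos : 0 < X.card := Finset.card_pos.mpr ⟨none, hmemX⟩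
    have hec := Finset.card_erase_of_mem hmemX
    rw [← hnldim] at hsle
    omega
  set S0 : Finset (Fin n) := Finset.univ.filter (fun a => some a ∈ X) with hS0
  have himg : S0.image some = X := by
    ext y
    constructor
    · intro hy
      obtain ⟨a, ha, rfl⟩ := Finset.mem_image.mp hy
      exact (Finset.mem_filter.mp ha).2
    · intro hy
      match y with
      | none => exact absurd hy hnone
      | some a =>
        exact Finset.mem_image_of_mem some (Finset.mem_filter.mpr ⟨Finset.mem_univ a, hy⟩)
  have hS0res : IsNLResolving (wheel n) (S0.image some) := himg ▸ hXres
  have hP0 : S12.P S0 := (S12.res_iff hn S0).mp hS0res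
  have hC1 : S12.C1 S0 := S12.P_to_C1 hn hP0
  have hC2 : S12.C2 S0 := S12.P_to_C2 hn hP0
  have hTex : ∃ T : Finset (Fin n), S12.C1 T ∧ S12.C2 T ∧ T.card = S0.card ∧
      ∀ a b : Fin n, IsGap T a b → (b - a).val ≠ 4 := by
    by_cases h3 : ∃ i j : Fin n, IsGap S0 i j ∧ (j - i).val = 4
    · obtain ⟨i, j, hg, h4⟩ := h3
      exact S12.surgery hn hC1 hC2 hg h4
    · exact ⟨S0, hC1, hC2, rfl, fun a b hab h4 => h3 ⟨a, b, hab, h4⟩⟩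
  obtain ⟨T, hTC1, hTC2, hTcard, hT4⟩ := hTex
  refine ⟨T, (S12.res_iff hn T).mpr (S12.C_to_P hn hTC1 hTC2), ?_, ?_, ?_, ?_, ?_⟩
  · rw [Finset.card_image_of_injective T (Option.some_injective _), hTcard,
      ← Finset.card_image_of_injective S0 (Option.some_injective _), himg, hXcard]
  · intro i j hgap
    have h5 := S12.cond1 hn hTC1 hgap
    unfold gapSize
    omega
  · intro i j i' j' hgap hgap' h3 h3'
    unfold gapSize at h3 h3'
    exact S12.cond2 hn hTC2 hgap hgap' (by omega) (by omega)
  · intro i j hgap h2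
    unfold gapSize at h2
    constructor
    · intro h hgaph
      by_contra hcon
      unfold gapSize at hcon
      exact S12.cond3 hn hTC1 hgaph hgap (by omega) (by omega)
    · intro k hgapk
      by_contra hcon
      unfold gapSize at hcon
      exact S12.cond3 hn hTC1 hgap hgapk (by omega) (by omega)
  · intro i j hgap hsz
    unfold gapSize at hsz
    exact hT4 i j hgap (by omega)
end
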